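/- arXiv:2402.07503 — 10 statements merged into one kernel-verified Lean document; each statement's English description precedes it below -/
import Mathlib

section
/- Let d ≥ 1. For each i = 1,…,d let q_i ≥ 0 and let ν_i be a nonnegative Borel measure on (0,∞) with ∫₀^∞ (v ∧ v²) ν_i(dv) < ∞, and define J_i(b) := (1/2) q_i b² + ∫₀^∞ (e^{−bv} − 1 + bv) ν_i(dv) for b ≥ 0. Assume each J_i is not identically zero and varies regularly at zero with some index α_i ∈ ℝ. Let G_1,…,G_d : [0,∞) → [0,∞) be continuous with G_i(0) = 0 for all i. Suppose there exist c ≥ 0 and a nonnegative Borel measure μ on (0,∞) with ∫₀^∞ (v ∧ v²) μ(dv) < ∞ such that, setting J̃(b) := c b² + ∫₀^∞ (e^{−bv} − 1 + bv) μ(dv), the identity Σ_{i=1}^d J_i(b·G_i(x)) = x·J̃(b) holds for all b ≥ 0 and all x ≥ 0, and suppose J̃ is not identically zero. Then there exist an integer g with 1 ≤ g ≤ d, reals η_1,…,η_g > 0 and pairwise distinct exponents β_1,…,β_g ∈ (1,2], each equal to one of the indices α_i, such that J̃(b) = Σ_{k=1}^g η_k b^{β_k} for all b ≥ 0. -/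
open MeasureTheory Real Set Filter
open scoped ENNReal NNReal


noncomputable def gg (t : ℝ) : ℝ := Real.exp (-t) - 1 + t

lemma gg_nonneg (t : ℝ) : 0 ≤ gg t := by
  have := Real.add_one_le_exp (-t); unfold gg; linarith

lemma gg_zero : gg 0 = 0 := by simp [gg]

lemma gg_hasDeriv (t : ℝ) : HasDerivAt gg (1 - Real.exp (-t)) t := by
  have h1 : HasDerivAt (fun t : ℝ => Real.exp (-t)) (-Real.exp (-t)) t := by
    simpa [Function.comp_def] using (Real.hasDerivAt_exp (-t)).comp t (hasDerivAt_neg t)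
  have h2 := (h1.sub_const 1).add (hasDerivAt_id t)
  have e : -Real.exp (-t) + 1 = 1 - Real.exp (-t) := by ring
  rw [e] at h2; exact h2

lemma gg_cont : Continuous gg := by
  unfold gg; continuity

lemma aux_nonneg {f f' : ℝ → ℝ} (a : ℝ) (h0 : f a = 0)
    (hd : ∀ t, HasDerivAt f (f' t) t) (h' : ∀ t, a ≤ t → 0 ≤ f' t) :
    ∀ t, a ≤ t → 0 ≤ f t := by
  intro t ht
  have hmono : MonotoneOn f (Set.Ici a) := by
    apply monotoneOn_of_deriv_nonneg (convex_Ici a)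
    · exact fun x _ => (hd x).continuousAt.continuousWithinAt
    · exact fun x _ => ((hd x).differentiableAt).differentiableWithinAt
    · intro x hx
      rw [(hd x).deriv]
      exact h' x (le_of_lt (by simpa [interior_Ici] using hx))
  have := hmono (self_mem_Ici) (by exact ht) ht
  linarith [h0 ▸ this]

lemma gg_le_lin {t : ℝ} (ht : 0 ≤ t) : gg t ≤ t := by
  have : Real.exp (-t) ≤ 1 := Real.exp_le_one_iff.mpr (by linarith)
  unfold gg; linarith

lemma gg_le_sq {t : ℝ} (ht : 0 ≤ t) : gg t ≤ t ^ 2 / 2 := by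
  have := aux_nonneg (f := fun t => t ^ 2 / 2 - gg t) (f' := fun t => t - (1 - Real.exp (-t))) 0
    (by simp [gg]) (fun t => by
      have h1 : HasDerivAt (fun t : ℝ => t ^ 2 / 2) t t := by
        simpa using ((hasDerivAt_pow 2 t).div_const 2)
      simpa [Pi.sub_def] using h1.sub (gg_hasDeriv t))
    (fun t ht => by have := gg_nonneg t; unfold gg at this; linarith)
  linarith [this t ht]

lemma gg_mono {s t : ℝ} (hs : 0 ≤ s) (hst : s ≤ t) : gg s ≤ gg t := by
  have h := aux_nonneg (f := fun t => gg t - gg s) (f' := fun t => 1 - Real.exp (-t)) s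
    (by simp) (fun t => by simpa using (gg_hasDeriv t).sub_const (gg s))
    (fun t ht => by
      have : Real.exp (-t) ≤ 1 := Real.exp_le_one_iff.mpr (by linarith)
      linarith)
  have := h t hst; linarith

lemma gg_def : gg = fun t => Real.exp (-t) - 1 + t := rfl

lemma exp_aux {t : ℝ} (ht : 0 ≤ t) : (1 + t) * Real.exp (-t) ≤ 1 := by
  have h := mul_le_mul_of_nonneg_right (Real.add_one_le_exp t) (le_of_lt (Real.exp_pos (-t)))
  rw [← Real.exp_add] at h
  simpa [add_comm] using h

lemma exp_concave_aux {t : ℝ} (ht : 0 ≤ t) :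
    ∀ l, 1 ≤ l → 1 - Real.exp (-(l*t)) ≤ l * (1 - Real.exp (-t)) := by
  intro l hl
  have h := aux_nonneg (f := fun l => l * (1 - Real.exp (-t)) - (1 - Real.exp (-(l*t))))
    (f' := fun l => (1 - Real.exp (-t)) - t * Real.exp (-(l*t))) 1
    (by simp)
    (fun l => by
      have h1 : HasDerivAt (fun l : ℝ => Real.exp (-(l*t))) (-t * Real.exp (-(l*t))) l := by
        have h2 : HasDerivAt (fun l : ℝ => -(l*t)) (-t) l := by
          simpa [Pi.neg_def] using ((hasDerivAt_id l).mul_const t).neg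
        simpa [mul_comm, Function.comp_def] using (Real.hasDerivAt_exp (-(l*t))).comp l h2
      have h3 := ((hasDerivAt_id l).mul_const (1 - Real.exp (-t))).sub
        ((hasDerivAt_const l 1).sub h1)
      simp only [id_eq] at h3
      have e : 1 * (1 - Real.exp (-t)) - (0 - -t * Real.exp (-(l*t)))
          = (1 - Real.exp (-t)) - t * Real.exp (-(l*t)) := by ring
      rw [e] at h3
      exact h3)
    (fun l hl => by
      have h1 : t * Real.exp (-(l*t)) ≤ t * Real.exp (-t) := by
        apply mul_le_mul_of_nonneg_left _ ht
        exact Real.exp_le_exp.mpr (by nlinarith)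
      have h2 := exp_aux ht
      linarith)
  have := h l hl; linarith

lemma two_gg_aux {t : ℝ} (ht : 0 ≤ t) : t * (1 - Real.exp (-t)) ≤ 2 * gg t := by
  have h := aux_nonneg (f := fun t => (2 + t) * Real.exp (-t) - 2 + t)
    (f' := fun t => 1 - (1 + t) * Real.exp (-t)) 0
    (by simp)
    (fun t => by
      have h1 : HasDerivAt (fun t : ℝ => Real.exp (-t)) (-Real.exp (-t)) t := by
        simpa [Function.comp_def] using (Real.hasDerivAt_exp (-t)).comp t (hasDerivAt_neg t)
      have h3 := (((hasDerivAt_const t 2).add (hasDerivAt_id t)).mul h1).sub_const 2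
      have h4 := h3.add (hasDerivAt_id t)
      simp only [Pi.add_apply, id_eq] at h4
      have e : (0 + 1) * Real.exp (-t) + (2 + t) * -Real.exp (-t) + 1
          = 1 - (1 + t) * Real.exp (-t) := by ring
      rw [e] at h4; exact h4)
    (fun t ht => by have := exp_aux ht; linarith)
  have := h t ht
  rw [gg_def]; dsimp only; nlinarith

lemma gg_scale {t : ℝ} (ht : 0 ≤ t) : ∀ l, 1 ≤ l → gg (l * t) ≤ l ^ 2 * gg t := by
  intro l hl
  have h := aux_nonneg (f := fun l => l ^ 2 * gg t - gg (l * t))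
    (f' := fun l => 2 * l * gg t - t * (1 - Real.exp (-(l*t)))) 1
    (by simp)
    (fun l => by
      have hmul : HasDerivAt (fun l : ℝ => l * t) t l := by
        simpa using (hasDerivAt_id l).mul_const t
      have h1 : HasDerivAt (fun l : ℝ => gg (l * t)) ((1 - Real.exp (-(l*t))) * t) l :=
        by have := (gg_hasDeriv (l*t)).comp l hmul; exact this
      have h2 := (((hasDerivAt_pow 2 l)).mul_const (gg t)).sub h1
      have e : (2 : ℕ) * l ^ (2-1) * gg t - (1 - Real.exp (-(l*t))) * t
          = 2 * l * gg t - t * (1 - Real.exp (-(l*t))) := by push_cast; ring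
      rw [e] at h2; exact h2)
    (fun l hl => by
      have hlt : 0 ≤ l * t := by positivity
      have h1 := exp_concave_aux ht l hl
      have h2 := two_gg_aux ht
      have h3 : t * (1 - Real.exp (-(l*t))) ≤ t * (l * (1 - Real.exp (-t))) :=
        mul_le_mul_of_nonneg_left h1 ht
      have h4 : l * (t * (1 - Real.exp (-t))) ≤ l * (2 * gg t) :=
        mul_le_mul_of_nonneg_left h2 (by linarith)
      nlinarith)
  have := h l hl; linarith

lemma gg_le_min {b v : ℝ} (hb : 0 ≤ b) (hv : 0 < v) :
    gg (b * v) ≤ (b + b ^ 2) * min v (v ^ 2) := by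
  have hbv : 0 ≤ b * v := by positivity
  rcases le_or_gt v 1 with h | h
  · rw [min_eq_right (by nlinarith)]
    have := gg_le_sq hbv
    nlinarith
  · rw [min_eq_left (by nlinarith)]
    have := gg_le_lin hbv
    nlinarith

lemma gg_le_sq_min {b v : ℝ} (hb : 1 ≤ b) (hv : 0 < v) :
    gg (b * v) ≤ b ^ 2 * min v (v ^ 2) := by
  have hbv : 0 ≤ b * v := by positivity
  rcases le_or_gt v 1 with h | h
  · rw [min_eq_right (by nlinarith)]
    have := gg_le_sq hbv
    nlinarith
  · rw [min_eq_left (by nlinarith)]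
    have := gg_le_lin hbv
    nlinarith

lemma D_integrable (ρ : Measure ℝ)
    (hρ : ∫⁻ v in Set.Ioi (0:ℝ), ENNReal.ofReal (min v (v^2)) ∂ρ < ⊤) :
    Integrable (fun v => min v (v ^ 2)) (ρ.restrict (Set.Ioi 0)) := by
  refine ⟨(continuous_id.min (continuous_pow 2)).aestronglyMeasurable, ?_⟩
  rw [HasFiniteIntegral]
  have h : ∀ᵐ v ∂(ρ.restrict (Set.Ioi 0)),
      ‖min v (v ^ 2)‖ₑ = ENNReal.ofReal (min v (v ^ 2)) := by
    filter_upwards [ae_restrict_mem measurableSet_Ioi] with v hv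
    have : (0:ℝ) ≤ min v (v ^ 2) := le_min (le_of_lt hv) (by positivity)
    rw [Real.enorm_eq_ofReal this]
  rwa [lintegral_congr_ae h]

lemma gg_integrable (ρ : Measure ℝ)
    (hρ : ∫⁻ v in Set.Ioi (0:ℝ), ENNReal.ofReal (min v (v^2)) ∂ρ < ⊤)
    {b : ℝ} (hb : 0 ≤ b) :
    Integrable (fun v => gg (b * v)) (ρ.restrict (Set.Ioi 0)) := by
  refine ⟨(gg_cont.comp (continuous_const.mul continuous_id)).aestronglyMeasurable, ?_⟩
  rw [HasFiniteIntegral]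
  calc ∫⁻ v, ‖gg (b * v)‖ₑ ∂(ρ.restrict (Set.Ioi 0))
      ≤ ∫⁻ v, ENNReal.ofReal (b + b ^ 2) * ENNReal.ofReal (min v (v ^ 2))
          ∂(ρ.restrict (Set.Ioi 0)) := by
        apply lintegral_mono_ae
        filter_upwards [ae_restrict_mem measurableSet_Ioi] with v hv
        rw [Real.enorm_eq_ofReal (gg_nonneg _), ← ENNReal.ofReal_mul (by positivity)]
        exact ENNReal.ofReal_le_ofReal (gg_le_min hb hv)
    _ = ENNReal.ofReal (b + b ^ 2) * ∫⁻ v, ENNReal.ofReal (min v (v ^ 2))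
          ∂(ρ.restrict (Set.Ioi 0)) := lintegral_const_mul' _ _ ENNReal.ofReal_ne_top
    _ < ⊤ := ENNReal.mul_lt_top ENNReal.ofReal_lt_top hρ

lemma gg_int_nonneg (ρ : Measure ℝ) (b : ℝ) :
    0 ≤ ∫ v in Set.Ioi (0:ℝ), gg (b * v) ∂ρ :=
  integral_nonneg (fun v => gg_nonneg _)

lemma gg_int_mono (ρ : Measure ℝ)
    (hρ : ∫⁻ v in Set.Ioi (0:ℝ), ENNReal.ofReal (min v (v^2)) ∂ρ < ⊤)
    {a b : ℝ} (ha : 0 ≤ a) (hab : a ≤ b) :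
    ∫ v in Set.Ioi (0:ℝ), gg (a * v) ∂ρ ≤ ∫ v in Set.Ioi (0:ℝ), gg (b * v) ∂ρ := by
  apply integral_mono_of_nonneg (Filter.Eventually.of_forall fun v => gg_nonneg _)
    (gg_integrable ρ hρ (le_trans ha hab))
  filter_upwards [ae_restrict_mem measurableSet_Ioi] with v hv
  have hv' : (0:ℝ) < v := hv
  exact gg_mono (mul_nonneg ha hv'.le) (by nlinarith)

lemma gg_int_scale (ρ : Measure ℝ)
    (hρ : ∫⁻ v in Set.Ioi (0:ℝ), ENNReal.ofReal (min v (v^2)) ∂ρ < ⊤)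
    {l y : ℝ} (hl : 1 ≤ l) (hy : 0 ≤ y) :
    ∫ v in Set.Ioi (0:ℝ), gg (l * y * v) ∂ρ
      ≤ l ^ 2 * ∫ v in Set.Ioi (0:ℝ), gg (y * v) ∂ρ := by
  rw [← integral_const_mul]
  apply integral_mono_of_nonneg (Filter.Eventually.of_forall fun v => gg_nonneg _)
    ((gg_integrable ρ hρ hy).const_mul _)
  filter_upwards [ae_restrict_mem measurableSet_Ioi] with v hv
  have hv' : (0:ℝ) < v := hv
  have e : l * y * v = l * (y * v) := by ring
  rw [e]
  exact gg_scale (mul_nonneg hy hv'.le) l hl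

lemma gg_int_sq (ρ : Measure ℝ)
    (hρ : ∫⁻ v in Set.Ioi (0:ℝ), ENNReal.ofReal (min v (v^2)) ∂ρ < ⊤)
    {b : ℝ} (hb : 1 ≤ b) :
    ∫ v in Set.Ioi (0:ℝ), gg (b * v) ∂ρ
      ≤ b ^ 2 * ∫ v in Set.Ioi (0:ℝ), min v (v ^ 2) ∂ρ := by
  rw [← integral_const_mul]
  apply integral_mono_of_nonneg (Filter.Eventually.of_forall fun v => gg_nonneg _)
    ((D_integrable ρ hρ).const_mul _)
  filter_upwards [ae_restrict_mem measurableSet_Ioi] with v hv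
  exact gg_le_sq_min hb hv

lemma gg_int_tendsto (ρ : Measure ℝ)
    (hρ : ∫⁻ v in Set.Ioi (0:ℝ), ENNReal.ofReal (min v (v^2)) ∂ρ < ⊤) :
    Filter.Tendsto (fun b => (∫ v in Set.Ioi (0:ℝ), gg (b * v) ∂ρ) / b)
      (nhdsWithin 0 (Set.Ioi 0)) (nhds 0) := by
  have key : Filter.Tendsto (fun b => ∫ v in Set.Ioi (0:ℝ), gg (b * v) / b ∂ρ)
      (nhdsWithin 0 (Set.Ioi 0)) (nhds (∫ v in Set.Ioi (0:ℝ), (0:ℝ) ∂ρ)) := by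
    apply MeasureTheory.tendsto_integral_filter_of_dominated_convergence
      (fun v => min v (v ^ 2))
    · exact Filter.Eventually.of_forall fun b =>
        ((gg_cont.comp (continuous_const.mul continuous_id)).div_const b).aestronglyMeasurable
    · filter_upwards [Ioc_mem_nhdsGT_of_mem (Set.left_mem_Ico.mpr one_pos)] with b hb
      filter_upwards [ae_restrict_mem measurableSet_Ioi] with v hv
      have hb0 : 0 < b := hb.1
      have hb1 : b ≤ 1 := hb.2
      have h0 : 0 ≤ gg (b * v) / b := div_nonneg (gg_nonneg _) hb0.le
      have hv' : (0:ℝ) < v := hv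
      rw [Real.norm_of_nonneg h0]
      apply le_min
      · rw [div_le_iff₀ hb0]
        calc gg (b * v) ≤ b * v := gg_le_lin (mul_nonneg hb0.le hv'.le)
          _ = v * b := by ring
      · rw [div_le_iff₀ hb0]
        calc gg (b * v) ≤ (b * v) ^ 2 / 2 := gg_le_sq (mul_nonneg hb0.le hv'.le)
          _ ≤ v ^ 2 * b := by nlinarith
    · exact D_integrable ρ hρ
    · filter_upwards [ae_restrict_mem measurableSet_Ioi] with v hv
      have hv' : (0:ℝ) < v := hv
      have hup : Filter.Tendsto (fun b : ℝ => b * (v ^ 2 / 2)) (nhdsWithin 0 (Set.Ioi 0))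
          (nhds 0) := by
        have h : Filter.Tendsto (fun b : ℝ => b) (nhdsWithin 0 (Set.Ioi 0)) (nhds 0) :=
          tendsto_id.mono_left nhdsWithin_le_nhds
        simpa using h.mul_const (v ^ 2 / 2)
      apply tendsto_of_tendsto_of_tendsto_of_le_of_le' tendsto_const_nhds hup
      · filter_upwards [self_mem_nhdsWithin] with b hb
        exact div_nonneg (gg_nonneg _) (le_of_lt hb)
      · filter_upwards [self_mem_nhdsWithin] with b hb
        have hb' : (0:ℝ) < b := hb
        rw [div_le_iff₀ hb']
        calc gg (b * v) ≤ (b * v) ^ 2 / 2 := gg_le_sq (mul_nonneg hb'.le hv'.le)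
          _ = b * (v ^ 2 / 2) * b := by ring
  rw [integral_zero] at key
  apply key.congr'
  filter_upwards [self_mem_nhdsWithin] with b hb
  rw [integral_div]

/-- classification of the Laplace exponent J̃ appearing in the affine
identity Σᵢ Jᵢ(b·Gᵢ(x)) = x·J̃(b), under regular variation of each Jᵢ at zero. -/
theorem stmt_0
    (d : ℕ) (hd : 1 ≤ d)
    (q : Fin d → ℝ) (hq : ∀ i, 0 ≤ q i)
    (ν : Fin d → Measure ℝ)
    (hν : ∀ i, ∫⁻ v in Set.Ioi (0:ℝ), ENNReal.ofReal (min v (v^2)) ∂(ν i) < ⊤)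
    (J : Fin d → ℝ → ℝ)
    (hJ : ∀ i b, J i b =
      q i / 2 * b^2 + ∫ v in Set.Ioi (0:ℝ), (Real.exp (-(b*v)) - 1 + b*v) ∂(ν i))
    (hJne : ∀ i, ∃ b > (0:ℝ), J i b ≠ 0)
    (α : Fin d → ℝ)
    (hreg : ∀ i, ∀ b > (0:ℝ),
      Filter.Tendsto (fun x => J i (b*x) / J i x) (nhdsWithin 0 (Set.Ioi 0)) (nhds (b ^ α i)))
    (G : Fin d → ℝ → ℝ)
    (hGcont : ∀ i, ContinuousOn (G i) (Set.Ici 0))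
    (hGnonneg : ∀ i, ∀ x ≥ (0:ℝ), 0 ≤ G i x)
    (hG0 : ∀ i, G i 0 = 0)
    (c : ℝ) (hc : 0 ≤ c)
    (μ : Measure ℝ)
    (hμ : ∫⁻ v in Set.Ioi (0:ℝ), ENNReal.ofReal (min v (v^2)) ∂μ < ⊤)
    (Jt : ℝ → ℝ)
    (hJt : ∀ b, Jt b = c * b^2 + ∫ v in Set.Ioi (0:ℝ), (Real.exp (-(b*v)) - 1 + b*v) ∂μ)
    (hEq : ∀ b ≥ (0:ℝ), ∀ x ≥ (0:ℝ), ∑ i, J i (b * G i x) = x * Jt b)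
    (hJtne : ∃ b > (0:ℝ), Jt b ≠ 0) :
    ∃ g : ℕ, 1 ≤ g ∧ g ≤ d ∧
      ∃ η β : Fin g → ℝ,
        (∀ k, 0 < η k) ∧
        Function.Injective β ∧
        (∀ k, β k ∈ Set.Ioc (1:ℝ) 2) ∧
        (∀ k, ∃ i, β k = α i) ∧
        (∀ b ≥ (0:ℝ), Jt b = ∑ k, η k * b ^ β k) := by
  classical
  obtain ⟨b₀, hb₀pos, hb₀ne⟩ := hJtne
  have hggfun : ∀ b : ℝ, (fun v => Real.exp (-(b*v)) - 1 + b*v) = fun v => gg (b*v) := by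
    intro b; funext v; rw [gg_def]
  have hJ' : ∀ i b, J i b = q i / 2 * b^2 + ∫ v in Set.Ioi (0:ℝ), gg (b*v) ∂(ν i) := by
    intro i b; rw [hJ i b, hggfun b]
  have hJt' : ∀ b, Jt b = c * b^2 + ∫ v in Set.Ioi (0:ℝ), gg (b*v) ∂μ := by
    intro b; rw [hJt b, hggfun b]
  -- basic facts about J
  have Jnn : ∀ i b, 0 ≤ J i b := by
    intro i b; rw [hJ']
    exact add_nonneg (mul_nonneg (div_nonneg (hq i) two_pos.le) (sq_nonneg b))
      (gg_int_nonneg _ _)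
  have Jmono : ∀ i {a b : ℝ}, 0 ≤ a → a ≤ b → J i a ≤ J i b := by
    intro i a b ha hab
    rw [hJ' i a, hJ' i b]
    exact add_le_add
      (mul_le_mul_of_nonneg_left (pow_le_pow_left₀ ha hab 2)
        (div_nonneg (hq i) two_pos.le))
      (gg_int_mono (ν i) (hν i) ha hab)
  have Jzero : ∀ i, J i 0 = 0 := by
    intro i; rw [hJ']; simp [gg_zero]
  have Jscale : ∀ i {l y : ℝ}, 1 ≤ l → 0 ≤ y → J i (l * y) ≤ l ^ 2 * J i y := by
    intro i l y hl hy
    rw [hJ' i (l*y), hJ' i y, mul_add]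
    refine add_le_add (le_of_eq (by ring)) ?_
    exact gg_int_scale (ν i) (hν i) hl hy
  have Jpos : ∀ i y, 0 < y → 0 < J i y := by
    intro i y hy
    by_contra hcon
    have hJy : J i y = 0 := le_antisymm (not_lt.mp hcon) (Jnn i y)
    have hz : ∀ x : ℝ, 0 < x → x ≤ y → J i x = 0 := fun x hx hxy =>
      le_antisymm (hJy ▸ Jmono i hx.le hxy) (Jnn i x)
    have h1 := hreg i 1 one_pos
    rw [Real.one_rpow] at h1
    have h2 : Filter.Tendsto (fun x => J i (1*x) / J i x)
        (nhdsWithin 0 (Set.Ioi 0)) (nhds 0) := by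
      apply Filter.Tendsto.congr' _ tendsto_const_nhds
      filter_upwards [Ioc_mem_nhdsGT_of_mem (Set.left_mem_Ico.mpr hy)] with t ht
      simp [hz t ht.1 ht.2]
    exact one_ne_zero (tendsto_nhds_unique h1 h2)
  -- basic facts about Jt
  have Jtnn : ∀ b, 0 ≤ Jt b := by
    intro b; rw [hJt']
    exact add_nonneg (mul_nonneg hc (sq_nonneg b)) (gg_int_nonneg _ _)
  have Jtzero : Jt 0 = 0 := by rw [hJt']; simp [gg_zero]
  have hJtb₀ : 0 < Jt b₀ := lt_of_le_of_ne (Jtnn b₀) (Ne.symm hb₀ne)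
  set K : ℝ := c + ∫ v in Set.Ioi (0:ℝ), min v (v ^ 2) ∂μ with hK
  have JtK : ∀ b : ℝ, 1 ≤ b → Jt b ≤ K * b ^ 2 := by
    intro b hb
    rw [hJt', hK, add_mul]
    exact add_le_add le_rfl
      (le_trans (gg_int_sq μ hμ hb) (le_of_eq (mul_comm _ _)))
  have Jtdiv : Filter.Tendsto (fun b => Jt b / b) (nhdsWithin 0 (Set.Ioi 0)) (nhds 0) := by
    have h1 := gg_int_tendsto μ hμ
    have h2 : Filter.Tendsto (fun b : ℝ => c * b) (nhdsWithin 0 (Set.Ioi 0)) (nhds 0) := by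
      have h : Filter.Tendsto (fun b : ℝ => b) (nhdsWithin 0 (Set.Ioi 0)) (nhds 0) :=
        tendsto_id.mono_left nhdsWithin_le_nhds
      simpa using h.const_mul c
    have h3 := h2.add h1
    rw [add_zero] at h3
    apply h3.congr'
    filter_upwards [self_mem_nhdsWithin] with b hb
    have hb' : (0:ℝ) < b := hb
    have hbne : b ≠ 0 := hb'.ne'
    rw [hJt']
    field_simp
  -- the sequence
  set x : ℕ → ℝ := fun n => 1 / (n+1) with hx
  have hxpos : ∀ n, 0 < x n := fun n => by simp only [hx]; positivity
  have hxlim : Filter.Tendsto x atTop (nhds 0) := tendsto_one_div_add_atTop_nhds_zero_nat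
  set u : ℕ → Fin d → ℝ := fun n i => J i (b₀ * G i (x n)) / (x n * Jt b₀) with hu
  have hden : ∀ n, 0 < x n * Jt b₀ := fun n => mul_pos (hxpos n) hJtb₀
  have husum : ∀ n, ∑ i, u n i = 1 := by
    intro n
    simp only [hu]
    rw [← Finset.sum_div, hEq b₀ hb₀pos.le (x n) (hxpos n).le, div_self (hden n).ne']
  have hunn : ∀ n i, 0 ≤ u n i := fun n i => div_nonneg (Jnn i _) (hden n).le
  have hule : ∀ n i, u n i ≤ 1 := by
    intro n i
    rw [← husum n]
    exact Finset.single_le_sum (fun j _ => hunn n j) (Finset.mem_univ i)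
  -- compactness
  have hcpt : IsCompact (Set.pi Set.univ (fun _ : Fin d => Set.Icc (0:ℝ) 1)) :=
    isCompact_univ_pi (fun _ => isCompact_Icc)
  obtain ⟨w, hwmem, φ, hφ, hwlim⟩ := hcpt.tendsto_subseq
    (x := u) (fun n => Set.mem_univ_pi.mpr (fun i => ⟨hunn n i, hule n i⟩))
  have hypos : ∀ n, 0 < x (φ n) := fun n => hxpos (φ n)
  have hylim : Filter.Tendsto (fun n => x (φ n)) atTop (nhds 0) :=
    hxlim.comp hφ.tendsto_atTop
  have hwi : ∀ i, Filter.Tendsto (fun n => u (φ n) i) atTop (nhds (w i)) := by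
    intro i
    exact (tendsto_pi_nhds.mp hwlim i)
  have hwnn : ∀ i, 0 ≤ w i := fun i => (Set.mem_univ_pi.mp hwmem i).1
  have hwsum : ∑ i, w i = 1 := by
    have h1 : Filter.Tendsto (fun n => ∑ i, u (φ n) i) atTop (nhds (∑ i, w i)) :=
      tendsto_finset_sum _ (fun i _ => hwi i)
    have h2 : Filter.Tendsto (fun n => ∑ i, u (φ n) i) atTop (nhds 1) := by
      exact Filter.Tendsto.congr (fun n => (husum (φ n)).symm) tendsto_const_nhds
    exact tendsto_nhds_unique h1 h2
  -- G along the sequence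
  have hGy : ∀ i, Filter.Tendsto (fun n => G i (x (φ n))) atTop (nhds 0) := by
    intro i
    have h1 : Filter.Tendsto (fun n => x (φ n)) atTop (nhdsWithin 0 (Set.Ici 0)) :=
      tendsto_nhdsWithin_of_tendsto_nhds_of_eventually_within _ hylim
        (Filter.Eventually.of_forall fun n => (hypos n).le)
    have h2 : ContinuousWithinAt (G i) (Set.Ici 0) 0 :=
      (hGcont i).continuousWithinAt Set.self_mem_Ici
    have h3 := h2.tendsto.comp h1
    rwa [hG0 i] at h3
  have hzz : ∀ i, 0 < w i →
      Filter.Tendsto (fun n => b₀ * G i (x (φ n))) atTop (nhdsWithin 0 (Set.Ioi 0)) := by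
    intro i hwip
    apply tendsto_nhdsWithin_of_tendsto_nhds_of_eventually_within
    · simpa using (hGy i).const_mul b₀
    · have hev : ∀ᶠ n in atTop, w i / 2 < u (φ n) i :=
        (hwi i).eventually (eventually_gt_nhds (half_lt_self hwip))
      filter_upwards [hev] with n hn
      have hupos : 0 < u (φ n) i := lt_trans (half_pos hwip) hn
      have hJd : 0 < J i (b₀ * G i (x (φ n))) := by
        rcases lt_or_eq_of_le (Jnn i (b₀ * G i (x (φ n)))) with h | h
        · exact h
        · exfalso
          simp only [hu] at hupos
          rw [← h, zero_div] at hupos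
          exact lt_irrefl 0 hupos
      have hGpos : 0 < G i (x (φ n)) := by
        rcases lt_or_eq_of_le (hGnonneg i (x (φ n)) (hypos n).le) with h | h
        · exact h
        · exfalso; rw [← h, mul_zero, Jzero i] at hJd; exact lt_irrefl 0 hJd
      exact mul_pos hb₀pos hGpos
  -- the representation
  have REP : ∀ b : ℝ, 0 < b → Jt (b * b₀) = ∑ i, w i * (Jt b₀ * b ^ α i) := by
    intro b hb
    have hid : ∀ n, ∑ i, u (φ n) i *
        (Jt b₀ * (J i (b * (b₀ * G i (x (φ n)))) / J i (b₀ * G i (x (φ n)))))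
        = Jt (b * b₀) := by
      intro n
      have hterm : ∀ i, u (φ n) i *
          (Jt b₀ * (J i (b * (b₀ * G i (x (φ n)))) / J i (b₀ * G i (x (φ n)))))
          = J i ((b * b₀) * G i (x (φ n))) / x (φ n) := by
        intro i
        have harg : (b * b₀) * G i (x (φ n)) = b * (b₀ * G i (x (φ n))) := by ring
        by_cases hG : G i (x (φ n)) = 0
        · simp [hu, hG, Jzero i]
        · have hGpos : 0 < G i (x (φ n)) :=
            lt_of_le_of_ne (hGnonneg i _ (hypos n).le) (Ne.symm hG)
          have hJd : 0 < J i (b₀ * G i (x (φ n))) := Jpos i _ (mul_pos hb₀pos hGpos)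
          rw [harg]
          simp only [hu]
          have h1 : J i (b₀ * G i (x (φ n))) ≠ 0 := hJd.ne'
          have h2 : x (φ n) ≠ 0 := (hypos n).ne'
          have h3 : Jt b₀ ≠ 0 := hJtb₀.ne'
          field_simp
      rw [Finset.sum_congr rfl (fun i _ => hterm i), ← Finset.sum_div,
        hEq (b * b₀) (by positivity) (x (φ n)) (hypos n).le,
        mul_div_cancel_left₀ _ (hypos n).ne']
    have hlim : Filter.Tendsto (fun n => ∑ i, u (φ n) i *
        (Jt b₀ * (J i (b * (b₀ * G i (x (φ n)))) / J i (b₀ * G i (x (φ n))))))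
        atTop (nhds (∑ i, w i * (Jt b₀ * b ^ α i))) := by
      apply tendsto_finset_sum
      intro i _
      rcases eq_or_lt_of_le (hwnn i) with hwi0 | hwip
      · -- w i = 0 : squeeze
        have hub : ∀ n, u (φ n) i *
            (Jt b₀ * (J i (b * (b₀ * G i (x (φ n)))) / J i (b₀ * G i (x (φ n)))))
            ≤ u (φ n) i * (Jt b₀ * max 1 (b ^ 2)) := by
          intro n
          apply mul_le_mul_of_nonneg_left _ (hunn (φ n) i)
          apply mul_le_mul_of_nonneg_left _ hJtb₀.le
          rcases eq_or_lt_of_le (Jnn i (b₀ * G i (x (φ n)))) with h0 | hposd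
          · rw [← h0, div_zero]
            exact le_trans zero_le_one (le_max_left _ _)
          · have hGnn : 0 ≤ b₀ * G i (x (φ n)) :=
              mul_nonneg hb₀pos.le (hGnonneg i _ (hypos n).le)
            rcases le_or_gt b 1 with hb1 | hb1
            · refine le_trans ((div_le_one hposd).mpr ?_) (le_max_left _ _)
              exact Jmono i (mul_nonneg hb.le hGnn)
                (by nlinarith)
            · refine le_trans ((div_le_iff₀ hposd).mpr ?_) (le_max_right _ _)
              exact Jscale i hb1.le hGnn
        have hlb : ∀ n, 0 ≤ u (φ n) i *
            (Jt b₀ * (J i (b * (b₀ * G i (x (φ n)))) / J i (b₀ * G i (x (φ n))))) := by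
          intro n
          exact mul_nonneg (hunn (φ n) i) (mul_nonneg hJtb₀.le
            (div_nonneg (Jnn i _) (Jnn i _)))
        have hupperlim : Filter.Tendsto (fun n => u (φ n) i * (Jt b₀ * max 1 (b ^ 2)))
            atTop (nhds 0) := by
          have := (hwi i).mul_const (Jt b₀ * max 1 (b ^ 2))
          rw [← hwi0, zero_mul] at this
          exact this
        have hzero : Filter.Tendsto (fun n => u (φ n) i *
            (Jt b₀ * (J i (b * (b₀ * G i (x (φ n)))) / J i (b₀ * G i (x (φ n))))))
            atTop (nhds 0) :=
          tendsto_of_tendsto_of_tendsto_of_le_of_le tendsto_const_nhds hupperlim hlb hub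
        rw [← hwi0, zero_mul]
        exact hzero
      · -- w i > 0
        have hr := (hreg i b hb).comp (hzz i hwip)
        exact (hwi i).mul (tendsto_const_nhds.mul hr)
    have hconst : Filter.Tendsto (fun n => ∑ i, u (φ n) i *
        (Jt b₀ * (J i (b * (b₀ * G i (x (φ n)))) / J i (b₀ * G i (x (φ n))))))
        atTop (nhds (Jt (b * b₀))) := by
      exact Filter.Tendsto.congr (fun n => (hid n).symm) tendsto_const_nhds
    exact tendsto_nhds_unique hconst hlim
  -- exponent range
  have halpha : ∀ i, 0 < w i → α i ∈ Set.Ioc (1:ℝ) 2 := by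
    intro i hwip
    constructor
    · by_contra hcon
      have hle : α i ≤ 1 := not_lt.mp hcon
      have hcomp : Filter.Tendsto (fun b => Jt (b * b₀) / (b * b₀))
          (nhdsWithin 0 (Set.Ioi 0)) (nhds 0) := by
        apply Jtdiv.comp
        apply tendsto_nhdsWithin_of_tendsto_nhds_of_eventually_within
        · have h : Filter.Tendsto (fun b : ℝ => b) (nhdsWithin 0 (Set.Ioi 0)) (nhds 0) :=
            tendsto_id.mono_left nhdsWithin_le_nhds
          simpa using h.mul_const b₀
        · filter_upwards [self_mem_nhdsWithin] with b hb
          have hb' : (0:ℝ) < b := hb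
          exact mul_pos hb' hb₀pos
      have hlow : ∀ᶠ b in nhdsWithin (0:ℝ) (Set.Ioi 0),
          w i * Jt b₀ / b₀ ≤ Jt (b * b₀) / (b * b₀) := by
        filter_upwards [Ioc_mem_nhdsGT_of_mem (Set.left_mem_Ico.mpr one_pos)] with b hb
        have hb0 : 0 < b := hb.1
        have hb1 : b ≤ 1 := hb.2
        have h1 : w i * (Jt b₀ * b ^ α i) ≤ Jt (b * b₀) := by
          rw [REP b hb0]
          exact Finset.single_le_sum
            (fun j _ => mul_nonneg (hwnn j)
              (mul_nonneg hJtb₀.le (Real.rpow_nonneg hb0.le _)))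
            (Finset.mem_univ i)
        have h2 : b ≤ b ^ α i := by
          have := Real.rpow_le_rpow_of_exponent_ge hb0 hb1 hle
          rwa [Real.rpow_one] at this
        rw [div_le_div_iff₀ hb₀pos (mul_pos hb0 hb₀pos)]
        have h3 : w i * Jt b₀ * b ≤ w i * (Jt b₀ * b ^ α i) := by
          nlinarith [mul_nonneg hwip.le hJtb₀.le]
        nlinarith [hb₀pos]
      have hfin := ge_of_tendsto hcomp hlow
      have : 0 < w i * Jt b₀ / b₀ := div_pos (mul_pos hwip hJtb₀) hb₀pos
      linarith
    · by_contra hcon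
      have hgt : 2 < α i := not_le.mp hcon
      set C : ℝ := K * b₀ ^ 2 / (w i * Jt b₀) with hC
      have hub : ∀ b : ℝ, 1 ≤ b → 1/b₀ ≤ b → b ^ (α i - 2) ≤ C := by
        intro b hb1 hbb
        have hb0 : 0 < b := lt_of_lt_of_le one_pos hb1
        have hbb₀ : 1 ≤ b * b₀ := by
          rw [div_le_iff₀ hb₀pos] at hbb
          linarith
        have h1 : w i * (Jt b₀ * b ^ α i) ≤ Jt (b * b₀) := by
          rw [REP b hb0]
          exact Finset.single_le_sum
            (fun j _ => mul_nonneg (hwnn j)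
              (mul_nonneg hJtb₀.le (Real.rpow_nonneg hb0.le _)))
            (Finset.mem_univ i)
        have h2 : Jt (b * b₀) ≤ K * (b * b₀) ^ 2 := JtK _ hbb₀
        have h4 : b ^ α i ≤ C * b ^ 2 := by
          rw [hC, div_mul_eq_mul_div, le_div_iff₀ (mul_pos hwip hJtb₀)]
          nlinarith
        have hb2 : (0:ℝ) < b ^ 2 := by positivity
        have h5 : b ^ (α i - 2) = b ^ α i / b ^ 2 := by
          rw [Real.rpow_sub hb0, Real.rpow_two]
        rw [h5, div_le_iff₀ hb2]
        exact h4
      have hinf := tendsto_rpow_atTop (show (0:ℝ) < α i - 2 by linarith)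
      have hev := (hinf.eventually_gt_atTop C).and
        ((eventually_ge_atTop (1:ℝ)).and (eventually_ge_atTop (1/b₀)))
      obtain ⟨b, hbgt, hb1, hb2⟩ := hev.exists
      exact absurd (hub b hb1 hb2) (not_le.mpr hbgt)
  -- final construction
  set S : Finset (Fin d) := Finset.univ.filter (fun i => 0 < w i) with hS
  have hSne : S.Nonempty := by
    by_contra hcon
    rw [Finset.not_nonempty_iff_eq_empty] at hcon
    have hall : ∀ i, w i = 0 := by
      intro i
      by_contra hne
      have hwip : 0 < w i := lt_of_le_of_ne (hwnn i) (Ne.symm hne)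
      have hmem : i ∈ S := by rw [hS]; exact Finset.mem_filter.mpr ⟨Finset.mem_univ i, hwip⟩
      rw [hcon] at hmem
      exact absurd hmem (Finset.notMem_empty i)
    rw [Finset.sum_congr rfl (fun i _ => hall i), Finset.sum_const, smul_zero] at hwsum
    exact one_ne_zero hwsum.symm
  set T : Finset ℝ := S.image α with hT
  have hTne : T.Nonempty := hSne.image α
  refine ⟨T.card, Finset.card_pos.mpr hTne, ?_, ?_⟩
  · calc T.card ≤ S.card := Finset.card_image_le
      _ ≤ (Finset.univ : Finset (Fin d)).card := by rw [hS]; exact Finset.card_filter_le _ _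
      _ = d := by rw [Finset.card_univ, Fintype.card_fin]
  · have e : ↥T ≃ Fin T.card := Fintype.equivFinOfCardEq (Fintype.card_coe T)
    set β : Fin T.card → ℝ := fun k => ((e.symm k : ↥T) : ℝ) with hβ
    set η : Fin T.card → ℝ :=
      fun k => ∑ i ∈ S.filter (fun i => α i = β k), w i * Jt b₀ / b₀ ^ α i with hη
    have hβT : ∀ k, β k ∈ T := fun k => (e.symm k).2
    have hwitness : ∀ k, ∃ i ∈ S, α i = β k := by
      intro k
      have := hβT k
      rw [hT, Finset.mem_image] at this
      obtain ⟨i, hiS, hαi⟩ := this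
      exact ⟨i, hiS, hαi⟩
    have hwS : ∀ i ∈ S, 0 < w i := by
      intro i hi
      rw [hS] at hi
      exact (Finset.mem_filter.mp hi).2
    refine ⟨η, β, ?_, ?_, ?_, ?_, ?_⟩
    · intro k
      obtain ⟨i₀, hi₀S, hαi₀⟩ := hwitness k
      rw [hη]
      apply Finset.sum_pos
      · intro i hi
        have hiS := (Finset.mem_filter.mp hi).1
        exact div_pos (mul_pos (hwS i hiS) hJtb₀) (Real.rpow_pos_of_pos hb₀pos _)
      · exact ⟨i₀, Finset.mem_filter.mpr ⟨hi₀S, hαi₀⟩⟩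
    · intro k k' hkk
      rw [hβ] at hkk
      exact e.symm.injective (Subtype.ext hkk)
    · intro k
      obtain ⟨i₀, hi₀S, hαi₀⟩ := hwitness k
      rw [← hαi₀]
      exact halpha i₀ (hwS i₀ hi₀S)
    · intro k
      obtain ⟨i₀, hi₀S, hαi₀⟩ := hwitness k
      exact ⟨i₀, hαi₀.symm⟩
    · intro b hb
      rcases eq_or_lt_of_le hb with hb0 | hbpos
      · rw [← hb0, Jtzero]
        symm
        apply Finset.sum_eq_zero
        intro k _
        obtain ⟨i₀, hi₀S, hαi₀⟩ := hwitness k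
        have h1 : (1:ℝ) < β k := by
          have := (halpha i₀ (hwS i₀ hi₀S)).1
          rwa [hαi₀] at this
        have h2 : β k ≠ 0 := by linarith
        rw [Real.zero_rpow h2, mul_zero]
      · have hrep := REP (b / b₀) (div_pos hbpos hb₀pos)
        rw [div_mul_cancel₀ _ hb₀pos.ne'] at hrep
        have hterm : ∀ i, w i * (Jt b₀ * (b / b₀) ^ α i)
            = w i * Jt b₀ / b₀ ^ α i * b ^ α i := by
          intro i
          rw [Real.div_rpow hbpos.le hb₀pos.le]
          have hb₀α : b₀ ^ α i ≠ 0 := (Real.rpow_pos_of_pos hb₀pos _).ne'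
          field_simp
        rw [Finset.sum_congr rfl (fun i _ => hterm i)] at hrep
        have hSsum : ∑ i, w i * Jt b₀ / b₀ ^ α i * b ^ α i
            = ∑ i ∈ S, w i * Jt b₀ / b₀ ^ α i * b ^ α i := by
          symm
          apply Finset.sum_subset (Finset.subset_univ S)
          intro i _ hiS
          have hwi0 : w i = 0 := by
            by_contra hne
            apply hiS
            rw [hS]
            exact Finset.mem_filter.mpr ⟨Finset.mem_univ i,
              lt_of_le_of_ne (hwnn i) (Ne.symm hne)⟩
          rw [hwi0]
          ring
        have hmapsto : ∀ i ∈ S, α i ∈ T := by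
          intro i hi
          rw [hT]
          exact Finset.mem_image_of_mem α hi
        have hfib := Finset.sum_fiberwise_of_maps_to hmapsto
          (fun i => w i * Jt b₀ / b₀ ^ α i * b ^ α i)
        have hfin : ∑ k : Fin T.card, η k * b ^ β k
            = ∑ t ∈ T, ∑ i ∈ S.filter (fun i => α i = t),
                w i * Jt b₀ / b₀ ^ α i * b ^ α i := by
          rw [← Finset.sum_coe_sort T (fun t => ∑ i ∈ S.filter (fun i => α i = t),
                w i * Jt b₀ / b₀ ^ α i * b ^ α i)]
          rw [← Equiv.sum_comp e.symm (fun t : ↥T => ∑ i ∈ S.filter (fun i => α i = (t:ℝ)),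
                w i * Jt b₀ / b₀ ^ α i * b ^ α i)]
          apply Finset.sum_congr rfl
          intro k _
          rw [hη]
          simp only [hβ]
          rw [Finset.sum_mul]
          apply Finset.sum_congr rfl
          intro i hi
          have hαi : α i = ((e.symm k : ↥T) : ℝ) := (Finset.mem_filter.mp hi).2
          rw [hαi]
        rw [hrep, hSsum, ← hfib]
        exact hfin.symm
end

section
/- Let μ be a nonnegative Borel measure on (0,∞) with ∫₀^∞ (v ∧ v²) μ(dv) < ∞ and define J_μ(b) := ∫₀^∞ (e^{−bv} − 1 + bv) μ(dv) for b ≥ 0. Suppose there exist an integer g ≥ 1, reals η_1,…,η_g > 0 and exponents 2 ≥ α_1 > α_2 > … > α_g > 1 such that J_μ(b) = Σ_{k=1}^g η_k b^{α_k} for all b ≥ 0. Then α_1 < 2, i.e. all exponents α_k lie in the open interval (1,2). -/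
open MeasureTheory Real Set Filter

lemma exp_key_ineq {x : ℝ} (hx : 0 ≤ x) : Real.exp (-x) - 1 + x ≤ min x (x^2) := by
  have hle1 : Real.exp (-x) ≤ 1 := Real.exp_le_one_iff.mpr (neg_nonpos.mpr hx)
  refine le_min (by linarith) ?_
  by_cases h1 : x ≤ 1
  · have habs : |(-x)| ≤ 1 := by rw [abs_neg, abs_of_nonneg hx]; exact h1
    have h := Real.exp_bound habs (n := 2) (by norm_num)
    have hsum : ∑ m ∈ Finset.range 2, (-x) ^ m / (m.factorial : ℝ) = 1 - x := by
      simp [Finset.sum_range_succ]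
      ring
    rw [hsum, abs_neg, abs_of_nonneg hx] at h
    have h' := (abs_sub_le_iff.1 h).1
    have hx2 : (0:ℝ) ≤ x^2 := sq_nonneg x
    norm_num at h'
    nlinarith
  · push_neg at h1
    nlinarith

/-- if the Laplace exponent J_μ of a measure μ with
∫ (v ∧ v²) μ(dv) < ∞ is a finite sum of powers Σ η_k b^{α_k} with
2 ≥ α_1 > ... > α_g > 1, then all exponents lie in the open interval (1,2). -/
theorem stmt_1
    (μ : Measure ℝ)
    (hμ : ∫⁻ v in Set.Ioi (0:ℝ), ENNReal.ofReal (min v (v^2)) ∂μ < ⊤)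
    (J : ℝ → ℝ)
    (hJ : ∀ b, J b = ∫ v in Set.Ioi (0:ℝ), (Real.exp (-(b*v)) - 1 + b*v) ∂μ)
    (g : ℕ) (hg : 1 ≤ g)
    (η α : Fin g → ℝ)
    (hη : ∀ k, 0 < η k)
    (hanti : StrictAnti α)
    (hα1 : α ⟨0, hg⟩ ≤ 2)
    (hαg : 1 < α ⟨g-1, by omega⟩)
    (hform : ∀ b ≥ (0:ℝ), J b = ∑ k, η k * b ^ α k) :
    ∀ k, α k < 2 := by
  -- The dominating function min v v² is integrable on (0,∞)
  have hmeas : AEStronglyMeasurable (fun v : ℝ => min v (v^2))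
      (μ.restrict (Set.Ioi 0)) :=
    (continuous_id.min (continuous_pow 2)).aestronglyMeasurable
  have hbound_int : Integrable (fun v : ℝ => min v (v^2)) (μ.restrict (Set.Ioi 0)) := by
    refine ⟨hmeas, ?_⟩
    have hnn : 0 ≤ᵐ[μ.restrict (Set.Ioi 0)] fun v : ℝ => min v (v^2) := by
      filter_upwards [ae_restrict_mem measurableSet_Ioi] with v hv
      exact le_min (le_of_lt hv) (sq_nonneg v)
    rw [hasFiniteIntegral_iff_ofReal hnn]
    exact hμ
  -- key estimate: for b ≥ 1, η k ≤ ∫ min (v/b) v²   whenever α k = 2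
  intro k
  by_contra hk2
  push_neg at hk2
  have hk0 : k = ⟨0, hg⟩ := by
    by_contra hne
    have hle : (⟨0, hg⟩ : Fin g) ≤ k := by
      rw [Fin.le_def]; exact Nat.zero_le _
    have := hanti (lt_of_le_of_ne hle (Ne.symm hne))
    linarith
  have hαk : α k = 2 := le_antisymm (hk0 ▸ hα1) hk2
  -- For every real b ≥ 1 : η k ≤ ∫ min (v/b) (v^2)
  have hkey : ∀ b : ℝ, 1 ≤ b → η k ≤ ∫ v in Set.Ioi (0:ℝ), min (v/b) (v^2) ∂μ := by
    intro b hb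
    have hb0 : (0:ℝ) < b := lt_of_lt_of_le one_pos hb
    have hgint : Integrable (fun v : ℝ => min (v/b) (v^2)) (μ.restrict (Set.Ioi 0)) := by
      refine hbound_int.mono
        ((continuous_id.div_const b).min (continuous_pow 2)).aestronglyMeasurable ?_
      filter_upwards [ae_restrict_mem measurableSet_Ioi] with v hv
      have hv0 : (0:ℝ) < v := hv
      have h1 : 0 ≤ min (v/b) (v^2) :=
        le_min (div_nonneg hv0.le hb0.le) (sq_nonneg v)
      have h2 : min (v/b) (v^2) ≤ min v (v^2) :=
        min_le_min (by rw [div_le_iff₀ hb0]; nlinarith) le_rfl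
      rw [Real.norm_of_nonneg h1, Real.norm_of_nonneg (le_min hv0.le (sq_nonneg v))]
      exact h2
    -- upper bound on J b
    have hJle : J b ≤ b^2 * ∫ v in Set.Ioi (0:ℝ), min (v/b) (v^2) ∂μ := by
      rw [hJ b, ← integral_const_mul]
      refine integral_mono_of_nonneg ?_ (hgint.const_mul _) ?_
      · filter_upwards [ae_restrict_mem measurableSet_Ioi] with v hv
        have hbv : 0 ≤ b * v := mul_nonneg hb0.le (le_of_lt hv)
        have := Real.add_one_le_exp (-(b*v))
        simp only [Pi.zero_apply]
        linarith
      · filter_upwards [ae_restrict_mem measurableSet_Ioi] with v hv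
        have hv0 : (0:ℝ) < v := hv
        have hbv : 0 ≤ b * v := mul_nonneg hb0.le hv0.le
        have h := exp_key_ineq hbv
        have heq : min (b*v) ((b*v)^2) = b^2 * min (v/b) (v^2) := by
          rw [mul_min_of_nonneg _ _ (by positivity : (0:ℝ) ≤ b^2)]
          congr 1
          · field_simp
          · ring
        calc Real.exp (-(b*v)) - 1 + b*v ≤ min (b*v) ((b*v)^2) := h
          _ = b^2 * min (v/b) (v^2) := heq
    -- lower bound on J b
    have hJge : η k * b^2 ≤ J b := by
      rw [hform b (by linarith)]
      have : η k * b ^ α k ≤ ∑ j, η j * b ^ α j := by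
        refine Finset.single_le_sum (f := fun j => η j * b ^ α j)
          (fun j _ => mul_nonneg (hη j).le (Real.rpow_nonneg hb0.le _))
          (Finset.mem_univ k)
      rwa [hαk, Real.rpow_two] at this
    have hb2 : (0:ℝ) < b^2 := by positivity
    nlinarith [hJle, hJge]
  -- DCT : ∫ min (v/(n+1)) v² → 0
  have hDCT : Tendsto (fun n : ℕ => ∫ v in Set.Ioi (0:ℝ), min (v/(n+1)) (v^2) ∂μ)
      atTop (nhds 0) := by
    have h := tendsto_integral_of_dominated_convergence
      (μ := μ.restrict (Set.Ioi (0:ℝ)))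
      (F := fun (n : ℕ) (v : ℝ) => min (v/((n:ℝ)+1)) (v^2))
      (f := fun _ : ℝ => (0:ℝ)) (fun v => min v (v^2))
      (fun n => ((continuous_id.div_const _).min (continuous_pow 2)).aestronglyMeasurable)
      hbound_int ?_ ?_
    · simpa using h
    · intro n
      filter_upwards [ae_restrict_mem measurableSet_Ioi] with v hv
      have hv0 : (0:ℝ) < v := hv
      have hn1 : (1:ℝ) ≤ (n:ℝ) + 1 := le_add_of_nonneg_left (Nat.cast_nonneg n)
      have h1 : 0 ≤ min (v/((n:ℝ)+1)) (v^2) :=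
        le_min (div_nonneg hv0.le (by positivity)) (sq_nonneg v)
      rw [Real.norm_of_nonneg h1]
      exact min_le_min (by rw [div_le_iff₀ (by positivity)]; nlinarith) le_rfl
    · filter_upwards [ae_restrict_mem measurableSet_Ioi] with v hv
      have hv0 : (0:ℝ) < v := hv
      have hto : Tendsto (fun n : ℕ => v / ((n:ℝ)+1)) atTop (nhds 0) := by
        have := tendsto_one_div_add_atTop_nhds_zero_nat.const_mul v
        simpa [mul_one_div, div_eq_mul_inv, mul_zero] using this
      refine squeeze_zero (fun n => ?_) (fun n => min_le_left _ _) hto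
      exact le_min (div_nonneg hv0.le (by positivity)) (sq_nonneg v)
  -- conclude
  have : η k ≤ 0 := by
    refine ge_of_tendsto hDCT ?_
    filter_upwards [eventually_ge_atTop 0] with n _
    exact hkey ((n:ℝ)+1) (le_add_of_nonneg_left (Nat.cast_nonneg n))
  linarith [hη k]
end

section
/- Let ρ be a nonnegative Borel measure on (0,∞) with 0 < ∫₀^∞ (v ∧ v²) ρ(dv) < ∞ and define J_ρ(b) := ∫₀^∞ (e^{−bv} − 1 + bv) ρ(dv). Then for every b₀ > 0 and every b ∈ (0, b₀) one has the strict two-sided bound (J_ρ(b₀)/b₀²)·b² < J_ρ(b) < (J_ρ(b₀)/b₀)·b. -/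
open MeasureTheory Real Set Filter

private noncomputable def fφ (x : ℝ) : ℝ := Real.exp (-x) - 1 + x

private lemma fφ_hasDerivAt (x : ℝ) : HasDerivAt fφ (1 - Real.exp (-x)) x := by
  have h1 : HasDerivAt (fun x : ℝ => Real.exp (-x)) (-Real.exp (-x)) x := by
    simpa [Function.comp_def] using (Real.hasDerivAt_exp (-x)).comp x (hasDerivAt_neg x)
  exact ((h1.sub_const 1).add (hasDerivAt_id x)).congr_deriv (by ring)

private lemma fφ_nonneg (x : ℝ) : 0 ≤ fφ x := by
  have := Real.add_one_le_exp (-x)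
  simp only [fφ]; linarith

private lemma fφ_pos {x : ℝ} (hx : 0 < x) : 0 < fφ x := by
  have := Real.add_one_lt_exp (x := -x) (by linarith)
  simp only [fφ]; linarith

private lemma aux1 {x : ℝ} (hx : 0 < x) : (1 + x) * Real.exp (-x) < 1 := by
  have h := Real.add_one_lt_exp (x := x) (ne_of_gt hx)
  rw [Real.exp_neg]
  rw [mul_inv_lt_iff₀ (Real.exp_pos x)]
  linarith

private lemma w_hasDerivAt (x : ℝ) :
    HasDerivAt (fun x => (2 + x) * Real.exp (-x) + x - 2)
      (1 - (1 + x) * Real.exp (-x)) x := by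
  have h1 : HasDerivAt (fun x : ℝ => Real.exp (-x)) (-Real.exp (-x)) x := by
    simpa [Function.comp_def] using (Real.hasDerivAt_exp (-x)).comp x (hasDerivAt_neg x)
  have h2 : HasDerivAt (fun x : ℝ => 2 + x) 1 x := (hasDerivAt_id x).const_add 2
  have := ((h2.mul h1).add (hasDerivAt_id x)).sub_const 2
  exact this.congr_deriv (by ring)

private lemma w_pos {x : ℝ} (hx : 0 < x) : 0 < (2 + x) * Real.exp (-x) + x - 2 := by
  have hmono : StrictMonoOn (fun x => (2 + x) * Real.exp (-x) + x - 2) (Set.Ici 0) := by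
    apply strictMonoOn_of_deriv_pos (convex_Ici 0)
    · exact fun y _ => ((w_hasDerivAt y).continuousAt).continuousWithinAt
    · intro y hy
      rw [interior_Ici] at hy
      rw [(w_hasDerivAt y).deriv]
      have := aux1 hy
      linarith
  have := hmono (Set.self_mem_Ici) (Set.mem_Ici.2 hx.le) hx
  simpa using this

/-- f x / x strictly increasing on Ioi 0 -/
private lemma hmono : StrictMonoOn (fun x => fφ x / x) (Set.Ioi 0) := by
  apply strictMonoOn_of_deriv_pos (convex_Ioi 0)
  · intro y hy
    exact (((fφ_hasDerivAt y).div (hasDerivAt_id' y) (ne_of_gt hy)).continuousAt).continuousWithinAt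
  · intro y hy
    rw [interior_Ioi] at hy
    rw [HasDerivAt.deriv (f := fun x => fφ x / x) ((fφ_hasDerivAt y).div (hasDerivAt_id' y) (ne_of_gt hy))]
    have h1 := aux1 hy
    have : (1 - Real.exp (-y)) * y - fφ y * 1 = 1 - (1 + y) * Real.exp (-y) := by
      simp only [fφ]; ring
    rw [this]
    exact div_pos (by linarith) (pow_pos hy 2)

/-- f x / x² strictly decreasing on Ioi 0 -/
private lemma hanti : StrictAntiOn (fun x => fφ x / x ^ 2) (Set.Ioi 0) := by
  apply strictAntiOn_of_deriv_neg (convex_Ioi 0)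
  · intro y hy
    have hy0 : (0:ℝ) < y := hy
    have hy' : (y:ℝ)^2 ≠ 0 := by positivity
    exact (((fφ_hasDerivAt y).div (hasDerivAt_pow 2 y) hy').continuousAt).continuousWithinAt
  · intro y hy
    rw [interior_Ioi] at hy
    have hy0 : (0:ℝ) < y := hy
    have hy' : (y:ℝ)^2 ≠ 0 := by positivity
    rw [HasDerivAt.deriv (f := fun x => fφ x / x ^ 2) ((fφ_hasDerivAt y).div (hasDerivAt_pow 2 y) hy')]
    have hw := w_pos hy
    apply div_neg_of_neg_of_pos
    · have hnum : (1 - Real.exp (-y)) * y ^ 2 - fφ y * (((2:ℕ):ℝ) * y ^ (2-1)) =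
        -y * ((2 + y) * Real.exp (-y) + y - 2) := by
        simp only [fφ]; push_cast; ring
      rw [hnum]
      exact mul_neg_of_neg_of_pos (by linarith) hw
    · positivity

private lemma fφ_le_lin {x : ℝ} (hx : 0 ≤ x) : fφ x ≤ x := by
  have : Real.exp (-x) ≤ Real.exp 0 := Real.exp_le_exp.2 (by linarith)
  simp only [Real.exp_zero] at this
  simp only [fφ]; linarith

private lemma fφ_le_sq {x : ℝ} (hx : 0 ≤ x) : fφ x ≤ x ^ 2 := by
  have hm : MonotoneOn (fun x : ℝ => x ^ 2 - fφ x) (Set.Ici 0) := by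
    apply monotoneOn_of_deriv_nonneg (convex_Ici 0)
    · exact fun y _ => (((hasDerivAt_pow 2 y).sub (fφ_hasDerivAt y)).continuousAt).continuousWithinAt
    · exact fun y _ => (((hasDerivAt_pow 2 y).sub (fφ_hasDerivAt y)).differentiableAt).differentiableWithinAt
    · intro y hy
      rw [interior_Ici] at hy
      rw [HasDerivAt.deriv (f := fun x => x ^ 2 - fφ x) ((hasDerivAt_pow 2 y).sub (fφ_hasDerivAt y))]
      have := Real.add_one_le_exp (-y)
      push_cast
      nlinarith [(Set.mem_Ioi.1 hy).le]
  have h0 := hm Set.self_mem_Ici (Set.mem_Ici.2 hx) hx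
  simp only [fφ, neg_zero, Real.exp_zero] at h0 ⊢
  nlinarith

private lemma key {a c : ℝ} (ha : 0 < a) (hac : a < c) :
    a ^ 2 / c ^ 2 * fφ c < fφ a ∧ fφ a < a / c * fφ c := by
  have hc : 0 < c := lt_trans ha hac
  have h1 := hanti (Set.mem_Ioi.2 ha) (Set.mem_Ioi.2 hc) hac
  have h2 := hmono (Set.mem_Ioi.2 ha) (Set.mem_Ioi.2 hc) hac
  simp only at h1 h2
  rw [div_lt_div_iff₀ (pow_pos hc 2) (pow_pos ha 2)] at h1
  rw [div_lt_div_iff₀ ha hc] at h2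
  constructor
  · rw [div_mul_eq_mul_div, div_lt_iff₀ (pow_pos hc 2)]
    nlinarith
  · rw [div_mul_eq_mul_div, lt_div_iff₀ hc]
    nlinarith

/-- the two-sided bound (J_ρ(b₀)/b₀²)·b² < J_ρ(b) < (J_ρ(b₀)/b₀)·b
for every b₀ > 0 and b ∈ (0, b₀). -/
theorem stmt_5
    (ρ : Measure ℝ)
    (hpos : 0 < ∫⁻ v in Set.Ioi (0:ℝ), ENNReal.ofReal (min v (v^2)) ∂ρ)
    (hfin : ∫⁻ v in Set.Ioi (0:ℝ), ENNReal.ofReal (min v (v^2)) ∂ρ < ⊤)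
    (J : ℝ → ℝ)
    (hJ : ∀ b, J b = ∫ v in Set.Ioi (0:ℝ), (Real.exp (-(b*v)) - 1 + b*v) ∂ρ) :
    ∀ b₀ > (0:ℝ), ∀ b ∈ Set.Ioo (0:ℝ) b₀,
      J b₀ / b₀^2 * b^2 < J b ∧ J b < J b₀ / b₀ * b := by
  intro b₀ hb₀ b hb
  obtain ⟨hb0, hbb₀⟩ := hb
  set μ := ρ.restrict (Set.Ioi 0) with hμ
  -- the measure on (0,∞) is nonzero
  have hμpos : 0 < ρ (Set.Ioi (0:ℝ)) := by
    by_contra h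
    push_neg at h
    have h0 : ρ (Set.Ioi (0:ℝ)) = 0 := le_antisymm h zero_le
    rw [hμ, Measure.restrict_eq_zero.2 h0] at hpos
    simp at hpos
  -- nonnegativity of min v v² on Ioi 0
  have hmin_nonneg : ∀ v ∈ Set.Ioi (0:ℝ), 0 ≤ min v (v^2) := fun v hv =>
    le_min (le_of_lt hv) (by positivity)
  -- integrability of min v v²
  have hmin_int : Integrable (fun v : ℝ => min v (v^2)) μ := by
    refine ⟨(continuous_id.min (continuous_pow 2)).aestronglyMeasurable, ?_⟩
    rw [hasFiniteIntegral_iff_ofReal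
      ((ae_restrict_iff' measurableSet_Ioi).2 (Filter.Eventually.of_forall hmin_nonneg))]
    exact hfin
  -- integrability of the integrand for each β > 0
  have hint : ∀ β : ℝ, 0 < β → Integrable (fun v => fφ (β * v)) μ := by
    intro β hβ
    refine Integrable.mono' (hmin_int.const_mul (max β (β^2)))
      ((((Real.continuous_exp.comp (continuous_const.mul continuous_id).neg).sub
        continuous_const).add (continuous_const.mul continuous_id)).aestronglyMeasurable) ?_
    refine (ae_restrict_iff' measurableSet_Ioi).2 (Filter.Eventually.of_forall fun v hv => ?_)
    have hv0 : (0:ℝ) < v := hv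
    rw [Real.norm_eq_abs, abs_of_nonneg (fφ_nonneg _)]
    rcases le_total v 1 with h1 | h1
    · have hmin : min v (v^2) = v^2 := min_eq_right (by nlinarith)
      rw [hmin]
      have := fφ_le_sq (x := β * v) (by positivity)
      have h2 : β^2 ≤ max β (β^2) := le_max_right _ _
      nlinarith [sq_nonneg v]
    · have hmin : min v (v^2) = v := min_eq_left (by nlinarith)
      rw [hmin]
      have := fφ_le_lin (x := β * v) (by positivity)
      have h2 : β ≤ max β (β^2) := le_max_left _ _
      nlinarith
  -- rewrite J in terms of fφ
  have hJ' : ∀ β : ℝ, J β = ∫ v, fφ (β * v) ∂μ := by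
    intro β
    rw [hJ]; rfl
  -- strict integral inequality helper
  have hstrict : ∀ g : ℝ → ℝ, Integrable g μ → (∀ v ∈ Set.Ioi (0:ℝ), 0 < g v) →
      0 < ∫ v, g v ∂μ := by
    intro g hg hgpos
    rw [integral_pos_iff_support_of_nonneg_ae
      ((ae_restrict_iff' measurableSet_Ioi).2
        (Filter.Eventually.of_forall fun v hv => (hgpos v hv).le)) hg]
    calc 0 < ρ (Set.Ioi 0) := hμpos
      _ = μ (Set.Ioi 0) := by rw [hμ, Measure.restrict_apply_self]
      _ ≤ μ (Function.support g) := measure_mono fun v hv => (hgpos v hv).ne'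
  have hIb := hint b hb0
  have hIb₀ := hint b₀ hb₀
  constructor
  · -- lower bound
    have h1 : 0 < ∫ v, (fφ (b * v) - b^2 / b₀^2 * fφ (b₀ * v)) ∂μ := by
      refine hstrict _ (hIb.sub (hIb₀.const_mul _)) fun v hv => ?_
      have hv0 : (0:ℝ) < v := hv
      have hk := (key (a := b * v) (c := b₀ * v) (by positivity)
        (by nlinarith)).1
      have : (b * v)^2 / (b₀ * v)^2 = b^2 / b₀^2 := by
        rw [mul_pow, mul_pow, mul_div_mul_right _ _ (by positivity : v^2 ≠ 0)]
      rw [this] at hk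
      linarith
    rw [integral_sub hIb (hIb₀.const_mul _), integral_const_mul] at h1
    rw [hJ' b, hJ' b₀]
    have heq : (∫ v, fφ (b₀ * v) ∂μ) / b₀^2 * b^2
        = b^2 / b₀^2 * ∫ v, fφ (b₀ * v) ∂μ := by ring
    linarith
  · -- upper bound
    have h1 : 0 < ∫ v, (b / b₀ * fφ (b₀ * v) - fφ (b * v)) ∂μ := by
      refine hstrict _ ((hIb₀.const_mul _).sub hIb) fun v hv => ?_
      have hv0 : (0:ℝ) < v := hv
      have hk := (key (a := b * v) (c := b₀ * v) (by positivity)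
        (by nlinarith)).2
      have : (b * v) / (b₀ * v) = b / b₀ := by
        rw [mul_div_mul_right _ _ (ne_of_gt hv0)]
      rw [this] at hk
      linarith
    rw [integral_sub (hIb₀.const_mul _) hIb, integral_const_mul] at h1
    rw [hJ' b, hJ' b₀]
    have heq : (∫ v, fφ (b₀ * v) ∂μ) / b₀ * b
        = b / b₀ * ∫ v, fφ (b₀ * v) ∂μ := by ring
    linarith
end

section
/- The function t ↦ (1 − e^{−t})·t / (e^{−t} − 1 + t) is strictly decreasing on (0,∞), tends to 2 as t → 0+ and tends to 1 as t → +∞. In particular, for every t > 0 one has the strict inequalities (e^{−t} − 1 + t) < (1 − e^{−t})·t < 2·(e^{−t} − 1 + t). -/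
open Real Set Filter Topology

private lemma hexp (t : ℝ) : HasDerivAt (fun t : ℝ => Real.exp (-t)) (-Real.exp (-t)) t := by
  simpa using (show HasDerivAt (fun t : ℝ => Real.exp (-t)) _ t from
    (Real.hasDerivAt_exp (-t)).comp t (hasDerivAt_neg t))

private lemma hN (t : ℝ) : HasDerivAt (fun t => (1 - Real.exp (-t)) * t)
    (Real.exp (-t) * t + (1 - Real.exp (-t))) t := by
  have : HasDerivAt (fun t => (1 - Real.exp (-t)) * t) _ t :=
    ((hasDerivAt_const t (1:ℝ)).sub (hexp t)).mul (hasDerivAt_id t)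
  simpa [mul_comm] using this

private lemma hD (t : ℝ) : HasDerivAt (fun t => Real.exp (-t) - 1 + t)
    (1 - Real.exp (-t)) t := by
  have : HasDerivAt (fun t => Real.exp (-t) - 1 + t) _ t :=
    ((hexp t).sub_const 1).add (hasDerivAt_id t)
  convert this using 1
  ring

private lemma Dpos {t : ℝ} (ht : 0 < t) : 0 < Real.exp (-t) - 1 + t := by
  have := Real.add_one_lt_exp (x := -t) (by linarith)
  linarith

private lemma Epos {t : ℝ} (ht : 0 < t) : 0 < 1 - Real.exp (-t) := by
  have := Real.exp_lt_one_iff.mpr (show -t < 0 by linarith)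
  linarith

private lemma key_s6 {t : ℝ} (ht : 0 < t) :
    Real.exp (-t) * t * t - (1 - Real.exp (-t)) ^ 2 < 0 := by
  have h1 : t / 2 < Real.sinh (t / 2) := Real.self_lt_sinh_iff.mpr (by linarith)
  rw [Real.sinh_eq] at h1
  have h2 : Real.exp (-(t/2)) * Real.exp (-(t/2)) = Real.exp (-t) := by
    rw [← Real.exp_add]; ring_nf
  have h3 : Real.exp (t/2) * Real.exp (-(t/2)) = 1 := by
    rw [← Real.exp_add]; simp
  have h4 : (0:ℝ) < Real.exp (-(t/2)) := Real.exp_pos _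
  have h5 : t * Real.exp (-(t/2)) < 1 - Real.exp (-t) := by
    nlinarith
  have h6 : 0 ≤ t * Real.exp (-(t/2)) := by positivity
  have h7 : Real.exp (-t) * t * t = (t * Real.exp (-(t/2)))^2 := by
    rw [← h2]; ring
  have h8 : (t * Real.exp (-(t/2)))^2 < (1 - Real.exp (-t))^2 := by
    apply pow_lt_pow_left₀ h5 h6
    norm_num
  linarith

/-- the function t ↦ (1 − e^{−t})t / (e^{−t} − 1 + t) is strictly
decreasing on (0,∞), tends to 2 at 0+ and to 1 at +∞; in particular
(e^{−t} − 1 + t) < (1 − e^{−t})t < 2(e^{−t} − 1 + t) for t > 0. -/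
theorem stmt_6 :
    StrictAntiOn (fun t => (1 - Real.exp (-t)) * t / (Real.exp (-t) - 1 + t)) (Set.Ioi 0) ∧
    Filter.Tendsto (fun t => (1 - Real.exp (-t)) * t / (Real.exp (-t) - 1 + t))
      (nhdsWithin 0 (Set.Ioi 0)) (nhds 2) ∧
    Filter.Tendsto (fun t => (1 - Real.exp (-t)) * t / (Real.exp (-t) - 1 + t))
      Filter.atTop (nhds 1) ∧
    ∀ t > (0:ℝ),
      Real.exp (-t) - 1 + t < (1 - Real.exp (-t)) * t ∧
      (1 - Real.exp (-t)) * t < 2 * (Real.exp (-t) - 1 + t) := by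
  have contD : Continuous fun t : ℝ => Real.exp (-t) - 1 + t := by
    continuity
  have contN : Continuous fun t : ℝ => (1 - Real.exp (-t)) * t := by
    continuity
  refine ⟨?_, ?_, ?_, ?_⟩
  · -- strict anti
    apply strictAntiOn_of_deriv_neg (convex_Ioi 0)
    · exact contN.continuousOn.div contD.continuousOn
        (fun t ht => (Dpos ht).ne')
    · intro t ht
      rw [interior_Ioi] at ht
      have hd : HasDerivAt (fun t => (1 - Real.exp (-t)) * t / (Real.exp (-t) - 1 + t)) _ t :=
        (hN t).div (hD t) (Dpos ht).ne'
      rw [hd.deriv]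
      apply div_neg_of_neg_of_pos
      · have := key_s6 ht
        nlinarith [this]
      · have := Dpos ht
        positivity
  · -- limit at 0+
    have slope1 : Tendsto (fun t : ℝ => (1 - Real.exp (-t)) / t) (𝓝[>] 0) (𝓝 1) := by
      have h0 : HasDerivAt (fun t : ℝ => 1 - Real.exp (-t)) 1 0 := by
        have : HasDerivAt (fun t : ℝ => 1 - Real.exp (-t)) _ 0 :=
          (hasDerivAt_const (0:ℝ) (1:ℝ)).sub (hexp 0)
        simpa using this
      have := hasDerivAt_iff_tendsto_slope.mp h0
      have h2 := this.mono_left (nhdsWithin_mono 0 (fun x hx => by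
        simp only [mem_compl_iff, mem_singleton_iff]
        exact ne_of_gt hx))
      refine h2.congr (fun t => ?_)
      simp [slope_def_field, div_eq_inv_mul]
    have inv1 : Tendsto (fun t : ℝ => t / (1 - Real.exp (-t))) (𝓝[>] 0) (𝓝 1) := by
      have := (slope1.inv₀ one_ne_zero)
      simpa using this.congr (fun t => by rw [inv_div])
    have hdiv : Tendsto (fun t : ℝ => (Real.exp (-t) * t + (1 - Real.exp (-t))) / (1 - Real.exp (-t)))
        (𝓝[>] 0) (𝓝 2) := by
      have hexp0 : Tendsto (fun t : ℝ => Real.exp (-t)) (𝓝[>] 0) (𝓝 1) := by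
        have : Continuous fun t : ℝ => Real.exp (-t) := by continuity
        simpa using (this.tendsto 0).mono_left nhdsWithin_le_nhds
      have := (hexp0.mul inv1).add tendsto_const_nhds (b := (1:ℝ))
      have h2 : Tendsto (fun t : ℝ => Real.exp (-t) * (t / (1 - Real.exp (-t))) + 1)
          (𝓝[>] 0) (𝓝 2) := by
        rw [show (2:ℝ) = 1*1+1 by norm_num]
        exact this
      refine Tendsto.congr' ?_ h2
      filter_upwards [self_mem_nhdsWithin] with t ht
      have h3 := (Epos ht).ne'
      field_simp
      try ring
    apply HasDerivAt.lhopital_zero_nhdsGT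
      (f' := fun t => Real.exp (-t) * t + (1 - Real.exp (-t))) (g' := fun t => 1 - Real.exp (-t))
    · exact Eventually.of_forall (fun t => hN t)
    · exact Eventually.of_forall (fun t => hD t)
    · filter_upwards [self_mem_nhdsWithin] with t ht
      exact (Epos ht).ne'
    · have : Tendsto (fun t : ℝ => (1 - Real.exp (-t)) * t) (𝓝 (0:ℝ)) (𝓝 0) := by
        have := contN.tendsto 0
        simpa using this
      exact this.mono_left nhdsWithin_le_nhds
    · have : Tendsto (fun t : ℝ => Real.exp (-t) - 1 + t) (𝓝 (0:ℝ)) (𝓝 0) := by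
        have := contD.tendsto 0
        simpa using this
      exact this.mono_left nhdsWithin_le_nhds
    · exact hdiv
  · -- limit at top
    have hev : ∀ᶠ t : ℝ in atTop,
        (1 - Real.exp (-t)) * t / (Real.exp (-t) - 1 + t)
          = (1 - Real.exp (-t)) / ((Real.exp (-t) - 1) / t + 1) := by
      filter_upwards [eventually_gt_atTop (0:ℝ)] with t ht
      have h1 := (Dpos ht).ne'
      have h2 := ht.ne'
      field_simp
      try ring
    rw [Filter.tendsto_congr' hev]
    have hnum : Tendsto (fun t : ℝ => 1 - Real.exp (-t)) atTop (𝓝 1) := by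
      simpa using (tendsto_const_nhds (x := (1:ℝ)) (f := atTop)).sub
        Real.tendsto_exp_neg_atTop_nhds_zero
    have hden : Tendsto (fun t : ℝ => (Real.exp (-t) - 1) / t + 1) atTop (𝓝 1) := by
      have h1 : Tendsto (fun t : ℝ => (Real.exp (-t) - 1) / t) atTop (𝓝 0) :=
        (Real.tendsto_exp_neg_atTop_nhds_zero.sub tendsto_const_nhds).div_atTop tendsto_id
      simpa using h1.add tendsto_const_nhds (b := (1:ℝ))
    simpa using (show Tendsto (fun t : ℝ => (1 - Real.exp (-t)) / ((Real.exp (-t) - 1) / t + 1))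
      atTop _ from hnum.div hden one_ne_zero)
  · -- inequalities
    intro t ht
    constructor
    · -- p(t) = (1-e^{-t})t - (e^{-t}-1+t) > 0
      have hp : StrictMonoOn (fun t => (1 - Real.exp (-t)) * t - (Real.exp (-t) - 1 + t))
          (Ici (0:ℝ)) := by
        apply strictMonoOn_of_deriv_pos (convex_Ici 0)
        · exact (contN.sub contD).continuousOn
        · intro x hx
          rw [interior_Ici] at hx
          rw [(show HasDerivAt
            (fun t => (1 - Real.exp (-t)) * t - (Real.exp (-t) - 1 + t)) _ x from
            (hN x).sub (hD x)).deriv]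
          have := Real.exp_pos (-x)
          have hx' : 0 < x := hx
          nlinarith
      have := hp (self_mem_Ici) (le_of_lt ht) ht
      simp only [neg_zero, Real.exp_zero] at this
      linarith [this]
    · have hq : StrictMonoOn (fun t => 2 * (Real.exp (-t) - 1 + t) - (1 - Real.exp (-t)) * t)
          (Ici (0:ℝ)) := by
        apply strictMonoOn_of_deriv_pos (convex_Ici 0)
        · exact ((continuous_const.mul contD).sub contN).continuousOn
        · intro x hx
          rw [interior_Ici] at hx
          rw [(show HasDerivAt
            (fun t => 2 * (Real.exp (-t) - 1 + t) - (1 - Real.exp (-t)) * t) _ x from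
            ((hD x).const_mul 2).sub (hN x)).deriv]
          have h1 := Real.add_one_lt_exp (x := x) (ne_of_gt hx)
          have h2 : Real.exp (-x) * Real.exp x = 1 := by
            rw [← Real.exp_add]; simp
          have h3 := Real.exp_pos (-x)
          nlinarith
      have := hq (self_mem_Ici) (le_of_lt ht) ht
      simp only [neg_zero, Real.exp_zero] at this
      linarith [this]
end

section
/- Let 1 < p < α < 2 and x > 0. Then ∫₀^∞ ((x+v)^p − x^p − p x^{p−1} v) v^{−1−α} dv = c_{α,p} · x^{p−α}, where c_{α,p} := (Γ(2−α)/(α(α−1))) · (p(p−1)/Γ(2−p)) · Γ(α−p). In particular, ∫₀^∞ ((1+u)^p − 1 − p u) u^{−1−α} du = c_{α,p}. -/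
open MeasureTheory Real Set Filter Topology

lemma realBeta (s t : ℝ) (hs : 0 < s) (ht : 0 < t) :
    ∫ y in (0:ℝ)..1, y^(s-1)*(1-y)^(t-1) = Real.Gamma s * Real.Gamma t / Real.Gamma (s+t) := by
  have h := Complex.Gamma_mul_Gamma_eq_betaIntegral (s := (s:ℂ)) (t := (t:ℂ))
    (by simpa using hs) (by simpa using ht)
  have hB : Complex.betaIntegral s t = ((∫ y in (0:ℝ)..1, y^(s-1)*(1-y)^(t-1)) : ℝ) := by
    rw [Complex.betaIntegral, ← intervalIntegral.integral_ofReal]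
    apply intervalIntegral.integral_congr
    intro x hx
    rw [uIcc_of_le zero_le_one, mem_Icc] at hx
    show _ = ((_ : ℝ) : ℂ)
    rw [Complex.ofReal_mul, Complex.ofReal_cpow hx.1, Complex.ofReal_cpow (by linarith [hx.2] : (0:ℝ) ≤ 1 - x)]
    push_cast
    ring
  rw [hB, ← Complex.ofReal_add, Complex.Gamma_ofReal, Complex.Gamma_ofReal,
    Complex.Gamma_ofReal, ← Complex.ofReal_mul, ← Complex.ofReal_mul] at h
  have h' := Complex.ofReal_inj.mp h
  have hst : Real.Gamma (s+t) ≠ 0 := (Real.Gamma_pos_of_pos (by linarith)).ne'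
  field_simp [h']
  linear_combination -h'

lemma betaIoi (s t : ℝ) (hs : 0 < s) (ht : 0 < t) :
    ∫ u in Ioi (0:ℝ), u^(s-1)*(1+u)^(-(s+t)) = Real.Gamma s * Real.Gamma t / Real.Gamma (s+t) := by
  have himg : (fun y : ℝ => y/(1-y)) '' Ioo 0 1 = Ioi 0 := by
    ext u
    constructor
    · rintro ⟨y, ⟨hy0, hy1⟩, rfl⟩
      exact div_pos hy0 (by linarith)
    · intro hu
      rw [mem_Ioi] at hu
      refine ⟨u/(1+u), ⟨div_pos hu (by linarith), (div_lt_one (by linarith)).mpr (by linarith)⟩, ?_⟩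
      field_simp
      ring
  have hderiv : ∀ y ∈ Ioo (0:ℝ) 1, HasDerivWithinAt (fun y : ℝ => y/(1-y)) (((1-y)^2)⁻¹) (Ioo 0 1) y := by
    intro y hy
    have h1 : (1:ℝ) - y ≠ 0 := by rw [mem_Ioo] at hy; intro h; linarith [hy.2]
    have := (hasDerivAt_id y).div ((hasDerivAt_id y).const_sub 1) h1
    exact this.hasDerivWithinAt.congr_deriv (by simp only [id_eq]; ring)
  have hinj : InjOn (fun y : ℝ => y/(1-y)) (Ioo 0 1) := by
    intro a ha b hb hab
    rw [mem_Ioo] at ha hb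
    simp only at hab
    have h1 : (1:ℝ) - a ≠ 0 := by intro h; linarith [ha.2]
    have h2 : (1:ℝ) - b ≠ 0 := by intro h; linarith [hb.2]
    field_simp at hab
    linarith
  calc ∫ u in Ioi (0:ℝ), u^(s-1)*(1+u)^(-(s+t))
      = ∫ y in Ioo (0:ℝ) 1, |((1-y)^2)⁻¹| • ((y/(1-y))^(s-1)*(1+y/(1-y))^(-(s+t))) := by
        rw [← himg, integral_image_eq_integral_abs_deriv_smul measurableSet_Ioo hderiv hinj]
    _ = ∫ y in Ioo (0:ℝ) 1, y^(s-1)*(1-y)^(t-1) := by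
        apply setIntegral_congr_fun measurableSet_Ioo
        intro y hy
        rw [mem_Ioo] at hy
        have hy0 : (0:ℝ) < y := hy.1
        have h1 : (0:ℝ) < 1 - y := by linarith [hy.2]
        have e1 : 1 + y/(1-y) = (1-y)⁻¹ := by field_simp; ring
        simp only [smul_eq_mul]
        have key : ∀ a c : ℝ, (1-y) ^ a * (1-y) ^ c = (1-y) ^ (a + c) :=
          fun a c => (Real.rpow_add h1 a c).symm
        rw [abs_of_pos (by positivity), e1, Real.div_rpow hy0.le h1.le,
          ← Real.rpow_natCast (1-y) 2]
        rw [Real.inv_rpow h1.le, ← Real.rpow_neg h1.le, ← Real.rpow_neg h1.le, div_eq_mul_inv,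
          ← Real.rpow_neg h1.le, neg_neg]
        rw [show (1-y) ^ (-((2:ℕ):ℝ)) * (y^(s-1) * (1-y)^(-(s-1)) * (1-y)^(s+t)) =
          y^(s-1) * ((1-y) ^ (-((2:ℕ):ℝ)) * (1-y)^(-(s-1)) * (1-y)^(s+t)) from by ring,
          key, key, show -((2:ℕ):ℝ) + -(s-1) + (s+t) = t - 1 from by push_cast; ring]
    _ = ∫ y in (0:ℝ)..1, y^(s-1)*(1-y)^(t-1) := by
        rw [intervalIntegral.integral_of_le zero_le_one, integral_Ioc_eq_integral_Ioo]
    _ = Real.Gamma s * Real.Gamma t / Real.Gamma (s+t) := realBeta s t hs ht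

-- integrability helper
lemma intHelper {g : ℝ → ℝ} (hg : ContinuousOn g (Ioi 0)) {C D r s : ℝ}
    (h0 : ∀ u ∈ Ioc (0:ℝ) 1, |g u| ≤ C * u^r) (h1 : ∀ u ∈ Ioi (1:ℝ), |g u| ≤ D * u^s)
    (hr : -1 < r) (hs : s < -1) : IntegrableOn g (Ioi 0) := by
  have hsub : Ioi (0:ℝ) = Ioc 0 1 ∪ Ioi 1 := (Ioc_union_Ioi_eq_Ioi zero_le_one).symm
  rw [hsub]
  refine integrableOn_union.mpr ⟨?_, ?_⟩
  · have hmeas : AEStronglyMeasurable g (volume.restrict (Ioc 0 1)) :=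
      (hg.mono Ioc_subset_Ioi_self).aestronglyMeasurable measurableSet_Ioc
    have hbound : IntegrableOn (fun u : ℝ => C * u^r) (Ioc 0 1) := by
      refine Integrable.const_mul ?_ C
      exact (intervalIntegrable_iff_integrableOn_Ioc_of_le zero_le_one).mp
        (intervalIntegral.intervalIntegrable_rpow' hr)
    exact Integrable.mono' hbound hmeas
      ((ae_restrict_iff' measurableSet_Ioc).mpr (ae_of_all _ (fun u hu => by
        rw [Real.norm_eq_abs]; exact h0 u hu)))
  · have hmeas : AEStronglyMeasurable g (volume.restrict (Ioi 1)) :=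
      (hg.mono (Ioi_subset_Ioi zero_le_one)).aestronglyMeasurable measurableSet_Ioi
    have hbound : IntegrableOn (fun u : ℝ => D * u^s) (Ioi 1) :=
      (integrableOn_Ioi_rpow_of_lt hs one_pos).const_mul D
    exact Integrable.mono' hbound hmeas
      ((ae_restrict_iff' measurableSet_Ioi).mpr (ae_of_all _ (fun u hu => by
        rw [Real.norm_eq_abs]; exact h1 u hu)))

lemma keyI (p α : ℝ) (hp : 1 < p) (hpα : p < α) (hα : α < 2) :
    (∫ u in Ioi (0:ℝ), ((1+u)^p - 1 - p*u) * u^(-1-α)) =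
      Real.Gamma (2-α) / (α*(α-1)) * (p*(p-1) / Real.Gamma (2-p)) * Real.Gamma (α-p) := by
  have hα1 : 1 < α := lt_trans hp hpα
  have hα0 : 0 < α := by linarith
  have hp0 : 0 < p := by linarith
  -- basic derivatives
  have hd1 : ∀ u : ℝ, 0 ≤ u →
      HasDerivAt (fun w => (1+w)^p - 1 - p*w) (p*(1+u)^(p-1) - p) u := by
    intro u hu
    have h : HasDerivAt (fun w : ℝ => 1 + w) 1 u := (hasDerivAt_id u).const_add 1
    have h2 := h.rpow_const (p := p) (Or.inl (by positivity))
    exact ((h2.sub_const 1).sub ((hasDerivAt_id u).const_mul p)).congr_deriv (by ring)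
  have hd2 : ∀ u : ℝ, 0 ≤ u →
      HasDerivAt (fun w => p*(1+w)^(p-1) - p) (p*(p-1)*(1+u)^(p-2)) u := by
    intro u hu
    have h : HasDerivAt (fun w : ℝ => 1 + w) 1 u := (hasDerivAt_id u).const_add 1
    have h2 := (h.rpow_const (p := p-1) (Or.inl (by positivity))).const_mul p
    have h3 := h2.sub_const p
    refine h3.congr_deriv ?_
    rw [show p-1-1 = p-2 by ring]
    ring
  -- nonnegativity and bounds
  have hfnn : ∀ u : ℝ, 0 ≤ u → 0 ≤ (1+u)^p - 1 - p*u := by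
    intro u hu
    have := one_add_mul_self_le_rpow_one_add (by linarith : (-1:ℝ) ≤ u) hp.le
    linarith
  have hf1nn : ∀ u : ℝ, 0 ≤ u → 0 ≤ p*(1+u)^(p-1) - p := by
    intro u hu
    have h1 : (1:ℝ) ≤ (1+u)^(p-1) := Real.one_le_rpow (by linarith) (by linarith)
    nlinarith
  have hf1le : ∀ u : ℝ, 0 ≤ u → p*(1+u)^(p-1) - p ≤ p*(p-1)*u := by
    intro u hu
    have h1 : (1+u)^(p-1) ≤ 1 + (p-1)*u :=
      rpow_one_add_le_one_add_mul_self (by linarith) (by linarith) (by linarith)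
    nlinarith
  have hfle : ∀ u : ℝ, 0 ≤ u → (1+u)^p - 1 - p*u ≤ p*(p-1)/2 * u^2 := by
    intro u hu
    have hcont : ∀ v : ℝ, 0 ≤ v → ContinuousAt (fun w : ℝ => p*(1+w)^(p-1) - p) v := by
      intro v hv
      have : ContinuousAt (fun w : ℝ => (1+w)^(p-1)) v := by
        apply ContinuousAt.rpow_const
        · exact (continuous_const.add continuous_id).continuousAt
        · left; positivity
      exact (this.const_mul p).sub continuousAt_const
    have hCon : ContinuousOn (fun w : ℝ => p*(1+w)^(p-1) - p) (Icc 0 u) :=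
      fun v hv => ((hcont v hv.1).continuousWithinAt)
    have hftc : (1+u)^p - 1 - p*u = ∫ t in (0:ℝ)..u, (p*(1+t)^(p-1) - p) := by
      have := intervalIntegral.integral_eq_sub_of_hasDerivAt
        (f := fun w => (1+w)^p - 1 - p*w) (f' := fun w => p*(1+w)^(p-1) - p)
        (a := 0) (b := u) ?_ ?_
      · rw [this]; norm_num
      · intro t ht
        rw [uIcc_of_le hu, mem_Icc] at ht
        exact hd1 t ht.1
      · have hCon' : ContinuousOn (fun w : ℝ => p*(1+w)^(p-1) - p) (uIcc 0 u) := by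
          rw [uIcc_of_le hu]; exact hCon
        exact hCon'.intervalIntegrable
    rw [hftc]
    have h2 : ∫ t in (0:ℝ)..u, (p*(1+t)^(p-1) - p) ≤ ∫ t in (0:ℝ)..u, p*(p-1)*t := by
      apply intervalIntegral.integral_mono_on hu
      · have hCon' : ContinuousOn (fun w : ℝ => p*(1+w)^(p-1) - p) (uIcc 0 u) := by
          rw [uIcc_of_le hu]; exact hCon
        exact hCon'.intervalIntegrable
      · exact (continuous_const.mul continuous_id).intervalIntegrable 0 u
      · intro t ht; exact hf1le t ht.1
    have h3 : ∫ t in (0:ℝ)..u, p*(p-1)*t = p*(p-1)/2*u^2 := by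
      rw [intervalIntegral.integral_const_mul, integral_id]; ring
    linarith [h2, h3.symm.le]
  -- upper bounds at infinity
  have hftop : ∀ u : ℝ, 1 ≤ u → (1+u)^p - 1 - p*u ≤ 2^p * u^p := by
    intro u hu
    have h1 : (1+u)^p ≤ (2*u)^p := Real.rpow_le_rpow (by linarith) (by linarith) hp0.le
    have h2 : ((2:ℝ)*u)^p = 2^p * u^p := Real.mul_rpow (by norm_num) (by linarith)
    nlinarith [mul_nonneg hp0.le (show (0:ℝ) ≤ u by linarith)]
  have hf1top : ∀ u : ℝ, 1 ≤ u → p*(1+u)^(p-1) - p ≤ p*2^(p-1) * u^(p-1) := by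
    intro u hu
    have h1 : (1+u)^(p-1) ≤ (2*u)^(p-1) :=
      Real.rpow_le_rpow (by linarith) (by linarith) (by linarith)
    have h2 : ((2:ℝ)*u)^(p-1) = 2^(p-1) * u^(p-1) := Real.mul_rpow (by norm_num) (by linarith)
    nlinarith [h1, h2]
  have hf2top : ∀ u : ℝ, 0 < u → (1+u)^(p-2) ≤ u^(p-2) :=
    fun u hu => Real.rpow_le_rpow_of_nonpos hu (by linarith) (by linarith)
  have hf2le : ∀ u : ℝ, 0 ≤ u → (1+u)^(p-2) ≤ 1 :=
    fun u hu => Real.rpow_le_one_of_one_le_of_nonpos (by linarith) (by linarith)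
  -- continuity
  have hbase : ContinuousOn (fun u : ℝ => 1 + u) (Ioi 0) :=
    (continuous_const.add continuous_id).continuousOn
  have hne : ∀ u : ℝ, u ∈ Ioi (0:ℝ) → (1:ℝ) + u ≠ 0 := by
    intro u hu; have := mem_Ioi.mp hu; positivity
  have hcf : ContinuousOn (fun u : ℝ => (1+u)^p - 1 - p*u) (Ioi 0) :=
    ((hbase.rpow_const (fun u hu => Or.inl (hne u hu))).sub continuousOn_const).sub
      ((continuous_const.mul continuous_id).continuousOn)
  have hcf1 : ContinuousOn (fun u : ℝ => p*(1+u)^(p-1) - p) (Ioi 0) :=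
    (((hbase.rpow_const (fun u hu => Or.inl (hne u hu))).const_smul p).sub
      continuousOn_const : ContinuousOn (fun u : ℝ => p • ((1+u)^(p-1)) - p) (Ioi 0))
  have hcf2 : ContinuousOn (fun u : ℝ => p*(p-1)*(1+u)^(p-2)) (Ioi 0) :=
    ((hbase.rpow_const (fun u hu => Or.inl (hne u hu))).const_smul (p*(p-1)) :
      ContinuousOn (fun u : ℝ => (p*(p-1)) • ((1+u)^(p-2))) (Ioi 0))
  have hcr : ∀ r : ℝ, ContinuousOn (fun u : ℝ => u^r) (Ioi 0) :=
    fun r => continuousOn_id.rpow_const (fun u hu => Or.inl (ne_of_gt (mem_Ioi.mp hu)))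
  have hcomb : ∀ (u : ℝ), 0 < u → ∀ a b : ℝ, u^a * u^b = u^(a+b) :=
    fun u hu a b => (Real.rpow_add hu a b).symm
  -- integrability
  have hA : IntegrableOn (fun u : ℝ => ((1+u)^p - 1 - p*u) * u^(-1-α)) (Ioi 0) := by
    refine intHelper (hcf.mul (hcr _)) (C := p*(p-1)/2) (D := 2^p) (r := 1-α) (s := p-1-α)
      ?_ ?_ (by linarith) (by linarith)
    · rintro u ⟨hu0, hu1⟩
      rw [abs_of_nonneg (mul_nonneg (hfnn u hu0.le) (Real.rpow_nonneg hu0.le _))]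
      calc ((1+u)^p - 1 - p*u) * u^(-1-α)
          ≤ (p*(p-1)/2*u^2) * u^(-1-α) :=
            mul_le_mul_of_nonneg_right (hfle u hu0.le) (Real.rpow_nonneg hu0.le _)
        _ = p*(p-1)/2 * u^(1-α) := by
            rw [mul_assoc, ← Real.rpow_natCast u 2, hcomb u hu0,
              show ((2:ℕ):ℝ) + (-1-α) = 1-α by push_cast; ring]
    · intro u hu
      have hu1 := mem_Ioi.mp hu
      have hu0 : (0:ℝ) < u := lt_trans one_pos hu1
      rw [abs_of_nonneg (mul_nonneg (hfnn u hu0.le) (Real.rpow_nonneg hu0.le _))]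
      calc ((1+u)^p - 1 - p*u) * u^(-1-α)
          ≤ (2^p * u^p) * u^(-1-α) :=
            mul_le_mul_of_nonneg_right (hftop u hu1.le) (Real.rpow_nonneg hu0.le _)
        _ = 2^p * u^(p-1-α) := by
            rw [mul_assoc, hcomb u hu0, show p + (-1-α) = p-1-α by ring]
  have hB : IntegrableOn (fun u : ℝ => (p*(1+u)^(p-1) - p) * u^(-α)) (Ioi 0) := by
    refine intHelper (hcf1.mul (hcr _)) (C := p*(p-1)) (D := p*2^(p-1)) (r := 1-α)
      (s := p-1-α) ?_ ?_ (by linarith) (by linarith)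
    · rintro u ⟨hu0, hu1⟩
      rw [abs_of_nonneg (mul_nonneg (hf1nn u hu0.le) (Real.rpow_nonneg hu0.le _))]
      calc (p*(1+u)^(p-1) - p) * u^(-α)
          ≤ (p*(p-1)*u) * u^(-α) :=
            mul_le_mul_of_nonneg_right (hf1le u hu0.le) (Real.rpow_nonneg hu0.le _)
        _ = p*(p-1) * u^(1-α) := by
            rw [mul_assoc]
            congr 1
            nth_rewrite 1 [← Real.rpow_one u]
            rw [hcomb u hu0, show (1:ℝ) + (-α) = 1-α by ring]
    · intro u hu
      have hu1 := mem_Ioi.mp hu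
      have hu0 : (0:ℝ) < u := lt_trans one_pos hu1
      rw [abs_of_nonneg (mul_nonneg (hf1nn u hu0.le) (Real.rpow_nonneg hu0.le _))]
      calc (p*(1+u)^(p-1) - p) * u^(-α)
          ≤ (p*2^(p-1) * u^(p-1)) * u^(-α) :=
            mul_le_mul_of_nonneg_right (hf1top u hu1.le) (Real.rpow_nonneg hu0.le _)
        _ = p*2^(p-1) * u^(p-1-α) := by
            rw [mul_assoc, hcomb u hu0, show (p-1) + (-α) = p-1-α by ring]
  have hC : IntegrableOn (fun u : ℝ => p*(p-1)*(1+u)^(p-2) * u^(1-α)) (Ioi 0) := by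
    refine intHelper (hcf2.mul (hcr _)) (C := p*(p-1)) (D := p*(p-1)) (r := 1-α)
      (s := p-1-α) ?_ ?_ (by linarith) (by linarith)
    · rintro u ⟨hu0, hu1⟩
      have h1 : (0:ℝ) ≤ (1+u)^(p-2) := Real.rpow_nonneg (by linarith) _
      have hpp : (0:ℝ) ≤ p*(p-1) := by nlinarith
      rw [abs_of_nonneg (mul_nonneg (mul_nonneg hpp h1) (Real.rpow_nonneg hu0.le _))]
      calc p*(p-1)*(1+u)^(p-2) * u^(1-α)
          ≤ p*(p-1)*1 * u^(1-α) :=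
            mul_le_mul_of_nonneg_right
              (mul_le_mul_of_nonneg_left (hf2le u hu0.le) hpp)
              (Real.rpow_nonneg hu0.le _)
        _ = p*(p-1) * u^(1-α) := by ring
    · intro u hu
      have hu1 := mem_Ioi.mp hu
      have hu0 : (0:ℝ) < u := lt_trans one_pos hu1
      have h1 : (0:ℝ) ≤ (1+u)^(p-2) := Real.rpow_nonneg (by linarith) _
      have hpp : (0:ℝ) ≤ p*(p-1) := by nlinarith
      rw [abs_of_nonneg (mul_nonneg (mul_nonneg hpp h1) (Real.rpow_nonneg hu0.le _))]
      calc p*(p-1)*(1+u)^(p-2) * u^(1-α)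
          ≤ p*(p-1)*u^(p-2) * u^(1-α) :=
            mul_le_mul_of_nonneg_right
              (mul_le_mul_of_nonneg_left (hf2top u hu0) hpp)
              (Real.rpow_nonneg hu0.le _)
        _ = p*(p-1) * u^(p-1-α) := by
            rw [mul_assoc, hcomb u hu0, show (p-2) + (1-α) = p-1-α by ring]
  -- limit helpers
  have hlim0 : ∀ (c e : ℝ), 0 < e → Tendsto (fun u : ℝ => c * u^e) (𝓝[>] (0:ℝ)) (𝓝 0) := by
    intro c e he
    have h := (Real.continuousAt_rpow_const 0 e (Or.inr he.le)).tendsto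
    rw [Real.zero_rpow (ne_of_gt he)] at h
    have h2 : Tendsto (fun x : ℝ => x ^ e) (𝓝[>] (0:ℝ)) (𝓝 0) :=
      h.mono_left nhdsWithin_le_nhds
    simpa using h2.const_mul c
  have hlimtop : ∀ (c e : ℝ), e < 0 → Tendsto (fun u : ℝ => c * u^e) atTop (𝓝 0) := by
    intro c e he
    have h := tendsto_rpow_neg_atTop (y := -e) (by linarith)
    simp only [neg_neg] at h
    simpa using h.const_mul c
  -- IBP 1
  have hG0 : ((1+(0:ℝ))^p - 1 - p*0) * (0:ℝ)^(-α) = 0 := by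
    rw [Real.zero_rpow (by linarith : -α ≠ 0)]; ring
  have hGd : ∀ u ∈ Ioi (0:ℝ), HasDerivAt (fun u : ℝ => ((1+u)^p - 1 - p*u) * u^(-α))
      ((p*(1+u)^(p-1) - p) * u^(-α) - α * (((1+u)^p - 1 - p*u) * u^(-1-α))) u := by
    intro u hu
    have hu0 := mem_Ioi.mp hu
    have h2 := Real.hasDerivAt_rpow_const (x := u) (p := -α) (Or.inl (ne_of_gt hu0))
    have h1 := (hd1 u hu0.le).mul h2
    refine h1.congr_deriv ?_
    rw [show -α-1 = -1-α by ring]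
    ring
  have hGcont : ContinuousWithinAt (fun u : ℝ => ((1+u)^p - 1 - p*u) * u^(-α)) (Ici 0) 0 := by
    rw [← continuousWithinAt_Ioi_iff_Ici]
    have ht : Tendsto (fun u : ℝ => ((1+u)^p - 1 - p*u) * u^(-α)) (𝓝[>] (0:ℝ)) (𝓝 0) := by
      apply squeeze_zero' (g := fun u : ℝ => p*(p-1)/2 * u^(2-α))
      · exact eventually_nhdsWithin_of_forall (fun u hu =>
          mul_nonneg (hfnn u (le_of_lt hu)) (Real.rpow_nonneg (le_of_lt hu) _))
      · apply eventually_nhdsWithin_of_forall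
        intro u hu
        have hu0 : (0:ℝ) < u := hu
        calc ((1+u)^p - 1 - p*u) * u^(-α)
            ≤ (p*(p-1)/2*u^2) * u^(-α) :=
              mul_le_mul_of_nonneg_right (hfle u hu0.le) (Real.rpow_nonneg hu0.le _)
          _ = p*(p-1)/2 * u^(2-α) := by
              rw [mul_assoc, ← Real.rpow_natCast u 2, hcomb u hu0,
                show ((2:ℕ):ℝ) + (-α) = 2-α by push_cast; ring]
      · exact hlim0 _ _ (by linarith)
    show Tendsto _ (𝓝[Ioi 0] 0) (𝓝 (((1+(0:ℝ))^p - 1 - p*0) * (0:ℝ)^(-α)))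
    rwa [hG0]
  have hGtop : Tendsto (fun u : ℝ => ((1+u)^p - 1 - p*u) * u^(-α)) atTop (𝓝 0) := by
    apply squeeze_zero' (g := fun u : ℝ => 2^p * u^(p-α))
    · exact (eventually_ge_atTop 0).mono (fun u hu =>
        mul_nonneg (hfnn u hu) (Real.rpow_nonneg hu _))
    · refine (eventually_ge_atTop 1).mono (fun u hu => ?_)
      have hu0 : (0:ℝ) < u := lt_of_lt_of_le one_pos hu
      calc ((1+u)^p - 1 - p*u) * u^(-α)
          ≤ (2^p * u^p) * u^(-α) :=
            mul_le_mul_of_nonneg_right (hftop u hu) (Real.rpow_nonneg hu0.le _)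
        _ = 2^p * u^(p-α) := by
            rw [mul_assoc, hcomb u hu0, show p + (-α) = p-α by ring]
    · exact hlimtop _ _ (by linarith)
  have hint1 : IntegrableOn (fun u : ℝ =>
      (p*(1+u)^(p-1) - p) * u^(-α) - α * (((1+u)^p - 1 - p*u) * u^(-1-α))) (Ioi 0) :=
    hB.sub (hA.const_mul α)
  have ibp1 := integral_Ioi_of_hasDerivAt_of_tendsto hGcont hGd hint1 hGtop
  norm_num [Real.zero_rpow (show -α ≠ 0 from by linarith), Real.one_rpow] at ibp1
  rw [integral_sub hB (hA.const_mul α), integral_const_mul, sub_eq_zero] at ibp1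
  -- IBP 2
  have hH0 : (p*(1+(0:ℝ))^(p-1) - p) * (0:ℝ)^(1-α) = 0 := by
    rw [Real.zero_rpow (by linarith : 1-α ≠ 0)]; ring
  have hHd : ∀ u ∈ Ioi (0:ℝ), HasDerivAt (fun u : ℝ => (p*(1+u)^(p-1) - p) * u^(1-α))
      (p*(p-1)*(1+u)^(p-2) * u^(1-α) - (α-1) * ((p*(1+u)^(p-1) - p) * u^(-α))) u := by
    intro u hu
    have hu0 := mem_Ioi.mp hu
    have h2 := Real.hasDerivAt_rpow_const (x := u) (p := 1-α) (Or.inl (ne_of_gt hu0))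
    have h1 := (hd2 u hu0.le).mul h2
    refine h1.congr_deriv ?_
    rw [show 1-α-1 = -α by ring]
    ring
  have hHcont : ContinuousWithinAt (fun u : ℝ => (p*(1+u)^(p-1) - p) * u^(1-α)) (Ici 0) 0 := by
    rw [← continuousWithinAt_Ioi_iff_Ici]
    have ht : Tendsto (fun u : ℝ => (p*(1+u)^(p-1) - p) * u^(1-α)) (𝓝[>] (0:ℝ)) (𝓝 0) := by
      apply squeeze_zero' (g := fun u : ℝ => p*(p-1) * u^(2-α))
      · exact eventually_nhdsWithin_of_forall (fun u hu =>
          mul_nonneg (hf1nn u (le_of_lt hu)) (Real.rpow_nonneg (le_of_lt hu) _))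
      · apply eventually_nhdsWithin_of_forall
        intro u hu
        have hu0 : (0:ℝ) < u := hu
        calc (p*(1+u)^(p-1) - p) * u^(1-α)
            ≤ (p*(p-1)*u) * u^(1-α) :=
              mul_le_mul_of_nonneg_right (hf1le u hu0.le) (Real.rpow_nonneg hu0.le _)
          _ = p*(p-1) * u^(2-α) := by
              rw [mul_assoc]
              congr 1
              nth_rewrite 1 [← Real.rpow_one u]
              rw [hcomb u hu0, show (1:ℝ) + (1-α) = 2-α by ring]
      · exact hlim0 _ _ (by linarith)
    show Tendsto _ (𝓝[Ioi 0] 0) (𝓝 ((p*(1+(0:ℝ))^(p-1) - p) * (0:ℝ)^(1-α)))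
    rwa [hH0]
  have hHtop : Tendsto (fun u : ℝ => (p*(1+u)^(p-1) - p) * u^(1-α)) atTop (𝓝 0) := by
    apply squeeze_zero' (g := fun u : ℝ => p*2^(p-1) * u^(p-α))
    · exact (eventually_ge_atTop 0).mono (fun u hu =>
        mul_nonneg (hf1nn u hu) (Real.rpow_nonneg hu _))
    · refine (eventually_ge_atTop 1).mono (fun u hu => ?_)
      have hu0 : (0:ℝ) < u := lt_of_lt_of_le one_pos hu
      calc (p*(1+u)^(p-1) - p) * u^(1-α)
          ≤ (p*2^(p-1) * u^(p-1)) * u^(1-α) :=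
            mul_le_mul_of_nonneg_right (hf1top u hu) (Real.rpow_nonneg hu0.le _)
        _ = p*2^(p-1) * u^(p-α) := by
            rw [mul_assoc, hcomb u hu0, show (p-1) + (1-α) = p-α by ring]
    · exact hlimtop _ _ (by linarith)
  have hint2 : IntegrableOn (fun u : ℝ =>
      p*(p-1)*(1+u)^(p-2) * u^(1-α) - (α-1) * ((p*(1+u)^(p-1) - p) * u^(-α))) (Ioi 0) :=
    hC.sub (hB.const_mul (α-1))
  have ibp2 := integral_Ioi_of_hasDerivAt_of_tendsto hHcont hHd hint2 hHtop
  norm_num [Real.zero_rpow (show 1-α ≠ 0 from by linarith), Real.one_rpow] at ibp2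
  rw [integral_sub hC (hB.const_mul (α-1)), integral_const_mul, sub_eq_zero] at ibp2
  -- Beta evaluation
  have hCval : (∫ u in Ioi (0:ℝ), p*(p-1)*(1+u)^(p-2) * u^(1-α))
      = p*(p-1) * (Real.Gamma (2-α) * Real.Gamma (α-p) / Real.Gamma (2-p)) := by
    have hb := betaIoi (2-α) (α-p) (by linarith) (by linarith)
    rw [show (2-α) + (α-p) = 2-p by ring] at hb
    rw [← hb, ← integral_const_mul]
    apply setIntegral_congr_fun measurableSet_Ioi
    intro u hu
    simp only
    rw [show (2-α)-(1:ℝ) = 1-α by ring, show -((2:ℝ)-p) = p-2 by ring]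
    ring
  -- assemble
  have hΓ : Real.Gamma (2-p) ≠ 0 := (Real.Gamma_pos_of_pos (by linarith)).ne'
  have hαne : α ≠ 0 := ne_of_gt hα0
  have hα1ne : α - 1 ≠ 0 := by intro h; linarith [hα1]
  rw [hCval] at ibp2
  have hmain : α*(α-1) * (∫ u in Ioi (0:ℝ), ((1+u)^p - 1 - p*u) * u^(-1-α)) =
      p*(p-1) * (Real.Gamma (2-α) * Real.Gamma (α-p) / Real.Gamma (2-p)) := by
    linear_combination (-(α-1)) * ibp1 - ibp2
  rw [show Real.Gamma (2-α) / (α*(α-1)) * (p*(p-1) / Real.Gamma (2-p)) * Real.Gamma (α-p) =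
    (p*(p-1) * (Real.Gamma (2-α) * Real.Gamma (α-p) / Real.Gamma (2-p)))/(α*(α-1)) from by
      field_simp, ← hmain]
  exact (mul_div_cancel_left₀ _ (mul_ne_zero hαne hα1ne)).symm

/-- for 1 < p < α < 2 and x > 0,
∫₀^∞ ((x+v)^p − x^p − p x^{p−1} v) v^{−1−α} dv = c_{α,p} x^{p−α}, where
c_{α,p} = (Γ(2−α)/(α(α−1)))(p(p−1)/Γ(2−p))Γ(α−p); in particular the u-integral
equals c_{α,p}. -/
theorem stmt_8 (p α : ℝ) (hp : 1 < p) (hpα : p < α) (hα : α < 2) (x : ℝ) (hx : 0 < x) :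
    (∫ v in Set.Ioi (0:ℝ), ((x+v)^p - x^p - p * x^(p-1) * v) * v^(-1-α)) =
      (Real.Gamma (2-α) / (α*(α-1)) * (p*(p-1) / Real.Gamma (2-p)) * Real.Gamma (α-p))
        * x^(p-α) ∧
    (∫ u in Set.Ioi (0:ℝ), ((1+u)^p - 1 - p*u) * u^(-1-α)) =
      Real.Gamma (2-α) / (α*(α-1)) * (p*(p-1) / Real.Gamma (2-p)) * Real.Gamma (α-p) := by
  have h2 := keyI p α hp hpα hα
  refine ⟨?_, h2⟩
  have hxne : x ≠ 0 := ne_of_gt hx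
  have e2 : ∀ a b : ℝ, x ^ a * x ^ b = x ^ (a+b) := fun a b => (Real.rpow_add hx a b).symm
  have hpt : ∀ v ∈ Ioi (0:ℝ), ((x+v)^p - x^p - p * x^(p-1) * v) * v^(-1-α) =
      x^(p-1-α) • (((1+x⁻¹*v)^p - 1 - p*(x⁻¹*v)) * (x⁻¹*v)^(-1-α)) := by
    intro v hv
    have hv0 := mem_Ioi.mp hv
    have hxv : (0:ℝ) < x + v := by linarith
    have e1 : 1 + x⁻¹*v = (x+v)*x⁻¹ := by field_simp
    rw [smul_eq_mul, e1, Real.mul_rpow hxv.le (inv_nonneg.mpr hx.le),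
        Real.mul_rpow (inv_nonneg.mpr hx.le) hv0.le,
        ← Real.rpow_neg_one x, ← Real.rpow_mul hx.le, ← Real.rpow_mul hx.le]
    have c1 : x^(p-1-α) * x^((-1)*(-1-α)) = x^p := by
      rw [e2, show p-1-α + (-1)*(-1-α) = p by ring]
    have c2 : x^((-1:ℝ)*p) * x^p = 1 := by
      rw [e2, show (-1:ℝ)*p + p = 0 by ring, Real.rpow_zero]
    have c3 : x^(-1:ℝ) * x^p = x^(p-1) := by
      rw [e2, show (-1:ℝ) + p = p-1 by ring]
    linear_combination
      (-(v^(-1-α) * ((x+v)^p * x^((-1:ℝ)*p) - 1 - p * (x^(-1:ℝ) * v)))) * c1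
      - ((x+v)^p * v^(-1-α)) * c2 + (p*v*v^(-1-α)) * c3
  rw [setIntegral_congr_fun measurableSet_Ioi hpt, integral_smul,
    integral_comp_mul_left_Ioi (fun u : ℝ => ((1+u)^p - 1 - p*u) * u^(-1-α)) 0
      (inv_pos.mpr hx), mul_zero, inv_inv]
  rw [h2, smul_eq_mul, smul_eq_mul, ← mul_assoc,
    show x^(p-1-α) * x = x^(p-α) from by
      rw [← Real.rpow_add_one hxne, show p-1-α+1 = p-α by ring],
    mul_comm (x^(p-α))]
end

section
/- Let b > 0, let g ≥ 1 be an integer, let η_1,…,η_g > 0 and let 2 ≥ α_1 > α_2 > … > α_g with α_g ∈ (1,2). Then, as u → 0+, 1 − exp(−∫₀^u b/(Σ_{k=1}^g η_k λ^{α_k−1}) dλ) is asymptotically equivalent to (b/(η_g(2−α_g))) · u^{2−α_g}, i.e. the ratio of the two quantities tends to 1 as u → 0+. -/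
open Real Set Filter intervalIntegral

/-- asymptotics at zero of 1 − exp(−∫₀^u b/(Σ η_k λ^{α_k−1}) dλ):
it is equivalent to (b/(η_g(2−α_g))) u^{2−α_g} as u → 0+. The g = n+1 components
are indexed by Fin (n+1), the exponents being strictly decreasing with α_0 ≤ 2
(so 2 ≥ α_1 > ... > α_g) and the last exponent α_{Fin.last n} ∈ (1,2). -/
theorem stmt_11 (b : ℝ) (hb : 0 < b) (n : ℕ)
    (η α : Fin (n+1) → ℝ) (hη : ∀ k, 0 < η k)
    (hanti : StrictAnti α) (hα1 : α 0 ≤ 2)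
    (hαg : α (Fin.last n) ∈ Set.Ioo (1:ℝ) 2) :
    Filter.Tendsto
      (fun u => (1 - Real.exp (-(∫ l in (0:ℝ)..u, b / (∑ k, η k * l ^ (α k - 1))))) /
        ((b / (η (Fin.last n) * (2 - α (Fin.last n)))) * u ^ (2 - α (Fin.last n))))
      (nhdsWithin 0 (Set.Ioi 0)) (nhds 1) := by
  classical
  set g : Fin (n+1) := Fin.last n with hgdef
  set β : ℝ := α g with hβdef
  obtain ⟨hβ1, hβ2⟩ := hαg
  have hβ1' : (0:ℝ) < β - 1 := by linarith
  have h2β : (0:ℝ) < 2 - β := by linarith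
  have h1β : (-1:ℝ) < 1 - β := by linarith
  have h1βne : (1:ℝ) - β ≠ 0 := by linarith
  have hαβ : ∀ k, β ≤ α k := fun k => hanti.antitone (Fin.le_last k)
  have hηg : 0 < η g := hη g
  set S : ℝ → ℝ := fun l => ∑ k, η k * l ^ (α k - 1) with hSdef
  set T : ℝ → ℝ := fun δ => ∑ k ∈ Finset.univ.erase g, η k * δ ^ (α k - β) with hTdef
  set c : ℝ := b / (η g * (2 - β)) with hcdef
  have hc : 0 < c := div_pos hb (mul_pos hηg h2β)
  set I : ℝ → ℝ := fun u => ∫ l in (0:ℝ)..u, b / S l with hIdef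
  set D : ℝ → ℝ := fun u => c * u ^ (2 - β) with hDdef
  -- basic facts about S
  have hScont : Continuous S := by
    apply continuous_finset_sum
    intro k _
    exact continuous_const.mul
      (Real.continuous_rpow_const (by have := hαβ k; linarith))
  have hSpos : ∀ l : ℝ, 0 < l → 0 < S l := fun l hl =>
    Finset.sum_pos (fun k _ => mul_pos (hη k) (Real.rpow_pos_of_pos hl _))
      Finset.univ_nonempty
  have hS0 : S 0 = 0 := by
    apply Finset.sum_eq_zero
    intro k _
    rw [Real.zero_rpow (ne_of_gt (by have := hαβ k; linarith : (0:ℝ) < α k - 1)), mul_zero]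
  have hSlb : ∀ l : ℝ, 0 < l → η g * l ^ (β - 1) ≤ S l := fun l hl =>
    Finset.single_le_sum (f := fun k => η k * l ^ (α k - 1))
      (fun k _ => le_of_lt (mul_pos (hη k) (Real.rpow_pos_of_pos hl _)))
      (Finset.mem_univ g)
  have hTnn : ∀ δ : ℝ, 0 ≤ δ → 0 ≤ T δ := fun δ hδ =>
    Finset.sum_nonneg fun k _ => mul_nonneg (hη k).le (Real.rpow_nonneg hδ _)
  -- rewriting b / (C * l^(β-1)) as (b/C) * l^(1-β)
  have hform : ∀ C : ℝ, 0 < C → ∀ l : ℝ, 0 < l →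
      b / (C * l ^ (β - 1)) = (b / C) * l ^ (1 - β) := by
    intro C hC l hl
    rw [show (1:ℝ) - β = -(β - 1) by ring, Real.rpow_neg hl.le]
    have hlp : l ^ (β - 1) ≠ 0 := (Real.rpow_pos_of_pos hl _).ne'
    field_simp
  -- pointwise upper bound for the integrand
  have hub : ∀ l : ℝ, 0 < l → b / S l ≤ (b / η g) * l ^ (1 - β) := by
    intro l hl
    rw [← hform (η g) hηg l hl]
    have h1 : 0 < η g * l ^ (β - 1) := mul_pos hηg (Real.rpow_pos_of_pos hl _)
    exact div_le_div_of_nonneg_left hb.le h1 (hSlb l hl) |>.trans_eq rfl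
  -- pointwise upper bound on S on (0, δ]
  have hSub : ∀ δ : ℝ, 0 < δ → ∀ l : ℝ, 0 < l → l ≤ δ →
      S l ≤ (η g + T δ) * l ^ (β - 1) := by
    intro δ hδ l hl hlδ
    have hsplit : S l = η g * l ^ (α g - 1)
        + ∑ k ∈ Finset.univ.erase g, η k * l ^ (α k - 1) :=
      (Finset.add_sum_erase _ _ (Finset.mem_univ g)).symm
    have hterm : ∀ k ∈ Finset.univ.erase g,
        η k * l ^ (α k - 1) ≤ (η k * δ ^ (α k - β)) * l ^ (β - 1) := by
      intro k _
      have h1 : l ^ (α k - 1) = l ^ (α k - β) * l ^ (β - 1) := by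
        rw [← Real.rpow_add hl]; ring_nf
      rw [h1, ← mul_assoc]
      apply mul_le_mul_of_nonneg_right _ (Real.rpow_nonneg hl.le _)
      apply mul_le_mul_of_nonneg_left _ (hη k).le
      exact Real.rpow_le_rpow hl.le hlδ (sub_nonneg.2 (hαβ k))
    calc S l = η g * l ^ (α g - 1)
          + ∑ k ∈ Finset.univ.erase g, η k * l ^ (α k - 1) := hsplit
      _ ≤ η g * l ^ (β - 1)
          + ∑ k ∈ Finset.univ.erase g, (η k * δ ^ (α k - β)) * l ^ (β - 1) := by
          exact add_le_add le_rfl (Finset.sum_le_sum hterm)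
      _ = (η g + T δ) * l ^ (β - 1) := by
          rw [← Finset.sum_mul, hTdef]; ring
  -- pointwise lower bound for the integrand on (0, δ]
  have hlb : ∀ δ : ℝ, 0 < δ → ∀ l : ℝ, 0 < l → l ≤ δ →
      (b / (η g + T δ)) * l ^ (1 - β) ≤ b / S l := by
    intro δ hδ l hl hlδ
    have hC : 0 < η g + T δ := by have := hTnn δ hδ.le; linarith
    rw [← hform _ hC l hl]
    exact div_le_div_of_nonneg_left hb.le (hSpos l hl) (hSub δ hδ l hl hlδ)
  -- integrability
  have hrpowInt : ∀ (C u : ℝ), IntervalIntegrable (fun l => C * l ^ (1 - β)) MeasureTheory.volume 0 u :=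
    fun C u => (intervalIntegrable_rpow' h1β).const_mul C
  have hfInt : ∀ u : ℝ, 0 < u → IntervalIntegrable (fun l => b / S l) MeasureTheory.volume 0 u := by
    intro u hu
    rw [intervalIntegrable_iff_integrableOn_Ioc_of_le hu.le]
    apply MeasureTheory.Integrable.mono'
      (g := fun l => (b / η g) * l ^ (1 - β))
      ((intervalIntegrable_iff_integrableOn_Ioc_of_le hu.le).mp (hrpowInt (b / η g) u))
    · exact (measurable_const.div hScont.measurable).aestronglyMeasurable
    · filter_upwards [MeasureTheory.ae_restrict_mem measurableSet_Ioc] with l hl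
      rw [Real.norm_eq_abs, abs_of_nonneg (div_nonneg hb.le (hSpos l hl.1).le)]
      exact hub l hl.1
  -- value of power integrals
  have hIpow : ∀ u : ℝ, ∀ C : ℝ,
      ∫ l in (0:ℝ)..u, C * l ^ (1 - β) = (C / (2 - β)) * u ^ (2 - β) := by
    intro u C
    rw [intervalIntegral.integral_const_mul, integral_rpow (Or.inl h1β),
      show (1:ℝ) - β + 1 = 2 - β by ring, Real.zero_rpow h2β.ne']
    ring
  -- the two-sided bound on I u for 0 < u ≤ δ
  have key : ∀ δ : ℝ, 0 < δ → ∀ u : ℝ, 0 < u → u ≤ δ →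
      (b / (η g + T δ) / (2 - β)) * u ^ (2 - β) ≤ I u ∧
        I u ≤ (b / η g / (2 - β)) * u ^ (2 - β) := by
    intro δ hδ u hu huδ
    constructor
    · rw [← hIpow u (b / (η g + T δ))]
      apply intervalIntegral.integral_mono_on hu.le (hrpowInt _ u) (hfInt u hu)
      intro l hl
      rcases eq_or_lt_of_le hl.1 with h | h
      · rw [← h, hS0, div_zero, Real.zero_rpow h1βne, mul_zero]
      · exact hlb δ hδ l h (hl.2.trans huδ)
    · rw [← hIpow u (b / η g)]
      apply intervalIntegral.integral_mono_on hu.le (hfInt u hu) (hrpowInt _ u)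
      intro l hl
      rcases eq_or_lt_of_le hl.1 with h | h
      · rw [← h, hS0, div_zero, Real.zero_rpow h1βne, mul_zero]
      · exact hub l h
  have hcform : b / η g / (2 - β) = c := by rw [hcdef, div_div]
  -- I u is positive
  have hIpos : ∀ u : ℝ, 0 < u → 0 < I u := fun u hu =>
    intervalIntegral.intervalIntegral_pos_of_pos_on (hfInt u hu)
      (fun x hx => div_pos hb (hSpos x hx.1)) hu
  have hDpos : ∀ u : ℝ, 0 < u → 0 < D u := fun u hu =>
    mul_pos hc (Real.rpow_pos_of_pos hu _)
  have hIub : ∀ u : ℝ, 0 < u → I u ≤ D u := by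
    intro u hu
    have := (key u hu u hu le_rfl).2
    rwa [hcform] at this
  -- T δ → 0 as δ → 0+
  have hT0 : Tendsto T (nhdsWithin 0 (Set.Ioi 0)) (nhds 0) := by
    have : Tendsto T (nhdsWithin 0 (Set.Ioi 0))
        (nhds (∑ k ∈ Finset.univ.erase g, (0:ℝ))) := by
      apply tendsto_finset_sum
      intro k hk
      have hkg : k ≠ g := Finset.ne_of_mem_erase hk
      have hklt : k < g := lt_of_le_of_ne (Fin.le_last k) hkg
      have hp : 0 < α k - β := sub_pos.2 (hanti hklt)
      have hct : ContinuousAt (fun x : ℝ => x ^ (α k - β)) 0 :=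
        Real.continuousAt_rpow_const 0 _ (Or.inr hp.le)
      have h1 : Tendsto (fun x : ℝ => x ^ (α k - β)) (nhds 0) (nhds 0) := by
        have := hct.tendsto
        rwa [Real.zero_rpow hp.ne'] at this
      have h2 : Tendsto (fun x : ℝ => η k * x ^ (α k - β)) (nhds 0) (nhds 0) := by
        simpa using h1.const_mul (η k)
      exact h2.mono_left nhdsWithin_le_nhds
    simpa using this
  -- I u → 0 as u → 0+
  have hD0 : Tendsto D (nhdsWithin 0 (Set.Ioi 0)) (nhds 0) := by
    have hct : ContinuousAt (fun x : ℝ => x ^ (2 - β)) 0 :=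
      Real.continuousAt_rpow_const 0 _ (Or.inr h2β.le)
    have h1 : Tendsto (fun x : ℝ => x ^ (2 - β)) (nhds 0) (nhds 0) := by
      have := hct.tendsto
      rwa [Real.zero_rpow h2β.ne'] at this
    have h2 : Tendsto D (nhds 0) (nhds 0) := by
      simpa [hDdef] using h1.const_mul c
    exact h2.mono_left nhdsWithin_le_nhds
  have hI0 : Tendsto I (nhdsWithin 0 (Set.Ioi 0)) (nhds 0) := by
    apply tendsto_of_tendsto_of_tendsto_of_le_of_le' tendsto_const_nhds hD0
    · filter_upwards [self_mem_nhdsWithin] with u hu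
      exact (hIpos u hu).le
    · filter_upwards [self_mem_nhdsWithin] with u hu
      exact hIub u hu
  have hI0' : Tendsto I (nhdsWithin 0 (Set.Ioi 0)) (nhdsWithin 0 (Set.Ioi 0)) := by
    rw [tendsto_nhdsWithin_iff]
    refine ⟨hI0, ?_⟩
    filter_upwards [self_mem_nhdsWithin] with u hu
    exact hIpos u hu
  -- Step A : I u / D u → 1
  have hA : Tendsto (fun u => I u / D u) (nhdsWithin 0 (Set.Ioi 0)) (nhds 1) := by
    rw [Metric.tendsto_nhdsWithin_nhds]
    intro ε hε
    obtain ⟨δ₀, hδ₀, hδ₀'⟩ := Metric.tendsto_nhdsWithin_nhds.1 hT0 (ε * η g)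
      (mul_pos hε hηg)
    refine ⟨δ₀ / 2, by positivity, ?_⟩
    intro u hu hud
    set δ : ℝ := δ₀ / 2 with hδdef
    have hδpos : 0 < δ := by positivity
    have hTδ : T δ < ε * η g := by
      have := hδ₀' (x := δ) hδpos (by
        rw [Real.dist_eq, sub_zero, abs_of_pos hδpos]; linarith)
      rw [Real.dist_eq, sub_zero] at this
      exact lt_of_le_of_lt (le_abs_self _) this
    have hTδnn : 0 ≤ T δ := hTnn δ hδpos.le
    have huδ : u ≤ δ := by
      rw [Real.dist_eq, sub_zero, abs_of_pos hu] at hud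
      exact hud.le
    obtain ⟨hL, hU⟩ := key δ hδpos u hu huδ
    have hDu : 0 < D u := hDpos u hu
    have hup : 0 < u ^ (2 - β) := Real.rpow_pos_of_pos hu _
    have hC : 0 < η g + T δ := by linarith
    have h1 : I u / D u ≤ 1 := (div_le_one hDu).2 (by rw [hcform] at hU; exact hU)
    have h2 : 1 - ε < I u / D u := by
      rw [lt_div_iff₀ hDu]
      refine lt_of_lt_of_le ?_ hL
      rw [hDdef, hcdef]
      have heq : (1 - ε) * (b / (η g * (2 - β)) * u ^ (2 - β))
          = ((1 - ε) * b / (η g * (2 - β))) * u ^ (2 - β) := by ring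
      rw [heq]
      apply mul_lt_mul_of_pos_right _ hup
      rw [div_div, div_lt_div_iff₀ (mul_pos hηg h2β) (mul_pos hC h2β)]
      nlinarith [mul_lt_mul_of_pos_left hTδ (mul_pos hb h2β),
        mul_nonneg (mul_nonneg (mul_pos hb h2β).le hε.le) hTδnn]
    rw [Real.dist_eq, abs_lt]
    constructor <;> linarith
  -- Step B : (1 - exp(-x))/x → 1 as x → 0+
  have hB0 : Tendsto (fun x : ℝ => (1 - Real.exp (-x)) / x)
      (nhdsWithin 0 (Set.Ioi 0)) (nhds 1) := by
    have hd : HasDerivAt Real.exp 1 0 := by simpa using Real.hasDerivAt_exp 0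
    have hs := hasDerivAt_iff_tendsto_slope.1 hd
    have hneg : Tendsto (fun x : ℝ => -x) (nhdsWithin 0 (Set.Ioi 0))
        (nhdsWithin 0 ({(0:ℝ)}ᶜ)) := by
      rw [tendsto_nhdsWithin_iff]
      constructor
      · have : Tendsto (fun x : ℝ => -x) (nhds 0) (nhds (-0)) := tendsto_neg 0
        simpa using this.mono_left nhdsWithin_le_nhds
      · filter_upwards [self_mem_nhdsWithin] with x hx
        simp only [Set.mem_compl_iff, Set.mem_singleton_iff, neg_eq_zero]
        exact ne_of_gt hx
    have hcomp := hs.comp hneg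
    apply hcomp.congr'
    filter_upwards [self_mem_nhdsWithin] with x hx
    have hx0 : x ≠ 0 := ne_of_gt hx
    show slope Real.exp 0 (-x) = (1 - Real.exp (-x)) / x
    rw [slope_def_field, Real.exp_zero,
      show Real.exp (-x) - 1 = -(1 - Real.exp (-x)) by ring,
      show -x - 0 = -x by ring, neg_div_neg_eq]
  have hB := hB0.comp hI0'
  -- combine
  have hmul : Tendsto (fun u => ((1 - Real.exp (-(I u))) / I u) * (I u / D u))
      (nhdsWithin 0 (Set.Ioi 0)) (nhds 1) := by
    have := hB.mul hA
    simpa using this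
  have hfinal : Tendsto (fun u => (1 - Real.exp (-(I u))) / D u)
      (nhdsWithin 0 (Set.Ioi 0)) (nhds 1) := by
    apply hmul.congr'
    filter_upwards [self_mem_nhdsWithin] with u hu
    rw [div_mul_div_comm, mul_comm (1 - Real.exp (-(I u))) (I u),
      mul_div_mul_left _ _ (hIpos u hu).ne']
  exact hfinal
end

section
/- Let a ∈ ℝ, let g ≥ 1 be an integer, let η_1,…,η_g > 0 and let α_1,…,α_g ∈ (1,2] be pairwise distinct, and define 𝓡(λ) := aλ − Σ_{k=1}^g η_k λ^{α_k} for λ ≥ 0. Then λ₀ := inf{λ > 0 : 1 + 𝓡(λ) = 0} is a finite positive real number, 1 + 𝓡(λ₀) = 0, 𝓡'(λ₀) < 0, 1 + 𝓡(y) > 0 for all y ∈ [0, λ₀), and the function 𝓖(x) := ∫₀^x 1/(1 + 𝓡(y)) dy is strictly increasing on [0, λ₀) with lim_{x→λ₀−} 𝓖(x) = +∞. -/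
open Real Set Filter intervalIntegral

/-- properties of the branching mechanism 𝓡(λ) = aλ − Σ η_k λ^{α_k}:
λ₀ = inf{λ > 0 : 1 + 𝓡(λ) = 0} is positive, 1 + 𝓡(λ₀) = 0, 𝓡'(λ₀) < 0,
1 + 𝓡 > 0 on [0, λ₀), and 𝓖(x) = ∫₀^x 1/(1+𝓡(y)) dy is strictly increasing on
[0, λ₀) with 𝓖(x) → +∞ as x → λ₀−. -/
theorem stmt_13 (a : ℝ) (g : ℕ) (hg : 1 ≤ g)
    (η α : Fin g → ℝ) (hη : ∀ k, 0 < η k) (hα : ∀ k, α k ∈ Set.Ioc (1:ℝ) 2)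
    (hinj : Function.Injective α)
    (R : ℝ → ℝ) (hR : ∀ l, R l = a * l - ∑ k, η k * l ^ α k)
    (lam0 : ℝ) (hlam0 : lam0 = sInf {l : ℝ | 0 < l ∧ 1 + R l = 0})
    (Gf : ℝ → ℝ) (hGf : ∀ x, Gf x = ∫ y in (0:ℝ)..x, 1 / (1 + R y)) :
    0 < lam0 ∧
    1 + R lam0 = 0 ∧
    deriv R lam0 < 0 ∧
    (∀ y ∈ Set.Ico (0:ℝ) lam0, 0 < 1 + R y) ∧
    StrictMonoOn Gf (Set.Ico 0 lam0) ∧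
    Filter.Tendsto Gf (nhdsWithin lam0 (Set.Iio lam0)) Filter.atTop := by
  have hα1 : ∀ k, (1:ℝ) < α k := fun k => (hα k).1
  have hα0 : ∀ k, (0:ℝ) ≤ α k := fun k => le_of_lt (lt_trans one_pos (hα1 k))
  -- continuity of R
  have hRcont : Continuous R := by
    have : Continuous fun l : ℝ => a * l - ∑ k, η k * l ^ α k := by
      refine (continuous_const.mul continuous_id).sub ?_
      exact continuous_finset_sum _ fun k _ =>
        continuous_const.mul (Real.continuous_rpow_const (hα0 k))
    simpa [funext hR] using this
  have hfcont : Continuous (fun l => 1 + R l) := continuous_const.add hRcont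
  -- value at 0
  have hR0 : R 0 = 0 := by
    rw [hR]
    rw [Finset.sum_eq_zero fun k _ => by
      rw [Real.zero_rpow (ne_of_gt (lt_trans one_pos (hα1 k))), mul_zero]]
    ring
  have hf0 : 1 + R 0 = 1 := by rw [hR0]; ring
  -- a point where 1 + R ≤ 0
  obtain ⟨L, hL1, hLle⟩ : ∃ L : ℝ, 1 ≤ L ∧ 1 + R L ≤ 0 := by
    set k0 : Fin g := ⟨0, hg⟩
    set c : ℝ := α k0 with hc
    have hc1 : (1:ℝ) < c := hα1 k0
    have hc0 : (0:ℝ) < c := lt_trans one_pos hc1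
    have htb : Tendsto (fun l : ℝ => 1 + a * l - η k0 * l ^ c) atTop atBot := by
      have h1 : Tendsto (fun l : ℝ => ((1 + a * l) * l ^ (-c) - η k0) * l ^ c) atTop atBot := by
        refine Tendsto.neg_mul_atTop (neg_neg_iff_pos.mpr (hη k0)) ?_ (tendsto_rpow_atTop hc0)
        have h2 : Tendsto (fun l : ℝ => (l ^ (-c) + a * l ^ (-(c-1))) - η k0) atTop
            (nhds ((0 + a * 0) - η k0)) :=
          ((tendsto_rpow_neg_atTop hc0).add
            ((tendsto_rpow_neg_atTop (by linarith)).const_mul a)).sub_const _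
        have h3 : (fun l : ℝ => (1 + a * l) * l ^ (-c) - η k0) =ᶠ[atTop]
            (fun l : ℝ => (l ^ (-c) + a * l ^ (-(c-1))) - η k0) := by
          filter_upwards [eventually_gt_atTop (0:ℝ)] with l hl
          have : l ^ (-(c-1)) = l * l ^ (-c) := by
            rw [show -(c-1) = 1 + (-c) by ring, Real.rpow_add hl, Real.rpow_one]
          rw [this]; ring_nf
        refine Tendsto.congr' h3.symm ?_
        simpa using h2
      refine h1.congr' ?_
      filter_upwards [eventually_gt_atTop (0:ℝ)] with l hl
      have hml : l ^ (-c) * l ^ c = 1 := by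
        rw [← Real.rpow_add hl]; simp
      calc ((1 + a * l) * l ^ (-c) - η k0) * l ^ c
          = (1 + a * l) * (l ^ (-c) * l ^ c) - η k0 * l ^ c := by ring
        _ = 1 + a * l - η k0 * l ^ c := by rw [hml]; ring
    have hev : ∀ᶠ l : ℝ in atTop, 1 + a * l - η k0 * l ^ c ≤ 0 :=
      htb.eventually (eventually_le_atBot 0)
    obtain ⟨L, hL1, hLv⟩ := ((eventually_ge_atTop (1:ℝ)).and hev).exists
    refine ⟨L, hL1, ?_⟩
    have hL0 : (0:ℝ) ≤ L := le_trans zero_le_one hL1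
    have hterm : ∀ k ∈ Finset.univ, 0 ≤ η k * L ^ α k := fun k _ =>
      mul_nonneg (hη k).le (Real.rpow_nonneg hL0 _)
    have := Finset.single_le_sum hterm (Finset.mem_univ k0)
    rw [hR]; linarith
  -- the root set
  set S : Set ℝ := {l : ℝ | 0 < l ∧ 1 + R l = 0} with hS
  have hL0 : (0:ℝ) ≤ L := le_trans zero_le_one hL1
  have hSne : S.Nonempty := by
    have h01 : (0:ℝ) ∈ Icc (1 + R L) (1 + R 0) := by
      constructor
      · exact hLle
      · rw [hf0]; exact zero_le_one
    obtain ⟨c, hcmem, hcval⟩ := intermediate_value_Icc' hL0 (hfcont.continuousOn) h01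
    refine ⟨c, ?_, hcval⟩
    rcases lt_or_eq_of_le hcmem.1 with h | h
    · exact h
    · exfalso; rw [← h] at hcval; simp only [hf0] at hcval; norm_num at hcval
  have hSbdd : BddBelow S := ⟨0, fun x hx => hx.1.le⟩
  have hSclosed : IsClosed S := by
    have : S = {l : ℝ | 0 ≤ l} ∩ {l : ℝ | 1 + R l = 0} := by
      ext x
      constructor
      · rintro ⟨h1, h2⟩; exact ⟨h1.le, h2⟩
      · rintro ⟨h1, h2⟩
        refine ⟨lt_of_le_of_ne h1 ?_, h2⟩
        rintro rfl; simp only [mem_setOf_eq, hf0] at h2; norm_num at h2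
    rw [this]
    exact isClosed_Ici.inter (isClosed_eq hfcont continuous_const)
  have hmem : lam0 ∈ S := hlam0 ▸ hSclosed.csInf_mem hSne hSbdd
  have hlampos : 0 < lam0 := hmem.1
  have hroot : 1 + R lam0 = 0 := hmem.2
  -- positivity on [0, lam0)
  have hpos : ∀ y ∈ Set.Ico (0:ℝ) lam0, 0 < 1 + R y := by
    intro y hy
    rcases lt_trichotomy (1 + R y) 0 with h | h | h
    · exfalso
      have h01 : (0:ℝ) ∈ Icc (1 + R y) (1 + R 0) := ⟨h.le, by rw [hf0]; exact zero_le_one⟩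
      obtain ⟨c, hcmem, hcval⟩ := intermediate_value_Icc' hy.1 (hfcont.continuousOn) h01
      have hcpos : 0 < c := by
        rcases lt_or_eq_of_le hcmem.1 with h' | h'
        · exact h'
        · exfalso; rw [← h'] at hcval; simp only [hf0] at hcval; norm_num at hcval
      have : lam0 ≤ c := hlam0 ▸ csInf_le hSbdd ⟨hcpos, hcval⟩
      linarith [hcmem.2, hy.2]
    · exfalso
      have hypos : 0 < y := by
        rcases lt_or_eq_of_le hy.1 with h' | h'
        · exact h'
        · exfalso; rw [← h'] at h; rw [hf0] at h; norm_num at h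
      have : lam0 ≤ y := hlam0 ▸ csInf_le hSbdd ⟨hypos, h⟩
      linarith [hy.2]
    · exact h
  -- derivative of R at lam0
  have hne : lam0 ≠ 0 := ne_of_gt hlampos
  have hderivR : HasDerivAt R (a - ∑ k, η k * (α k * lam0 ^ (α k - 1))) lam0 := by
    have h1 : HasDerivAt (fun l : ℝ => a * l) a lam0 := by
      simpa using (hasDerivAt_id lam0).const_mul a
    have h2 : HasDerivAt (fun l : ℝ => ∑ k, η k * l ^ α k)
        (∑ k, η k * (α k * lam0 ^ (α k - 1))) lam0 :=
      HasDerivAt.fun_sum fun k _ => (Real.hasDerivAt_rpow_const (Or.inl hne)).const_mul (η k)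
    have := h1.sub h2
    rwa [show R = fun l : ℝ => a * l - ∑ k, η k * l ^ α k from funext hR]
  have hpow1 : ∀ k : Fin g, lam0 ^ (α k - 1) = lam0 ^ α k / lam0 := fun k => by
    rw [Real.rpow_sub hlampos, Real.rpow_one]
  have hsum1 : ∑ k, η k * lam0 ^ (α k - 1) = (∑ k, η k * lam0 ^ α k) / lam0 := by
    rw [Finset.sum_div]
    exact Finset.sum_congr rfl fun k _ => by rw [hpow1 k, mul_div_assoc]
  have hsumval : ∑ k, η k * lam0 ^ α k = 1 + a * lam0 := by
    have := hroot
    rw [hR] at this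
    linarith
  have hval : a - ∑ k, η k * lam0 ^ (α k - 1) = -(1 / lam0) := by
    rw [hsum1, hsumval]
    field_simp
    ring
  have hsumlt : ∑ k, η k * lam0 ^ (α k - 1) < ∑ k, η k * (α k * lam0 ^ (α k - 1)) := by
    have hne' : (Finset.univ : Finset (Fin g)).Nonempty := ⟨⟨0, hg⟩, Finset.mem_univ _⟩
    refine Finset.sum_lt_sum_of_nonempty hne' fun k _ => ?_
    have hp : 0 < lam0 ^ (α k - 1) := Real.rpow_pos_of_pos hlampos _
    nlinarith [mul_pos (mul_pos (hη k) hp) (sub_pos.mpr (hα1 k))]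
  have hderivlt : deriv R lam0 < 0 := by
    rw [hderivR.deriv]
    have : a - ∑ k, η k * (α k * lam0 ^ (α k - 1)) < a - ∑ k, η k * lam0 ^ (α k - 1) := by
      linarith
    rw [hval] at this
    have h0 : 0 < 1 / lam0 := by positivity
    linarith
  -- integrability of the integrand on subintervals of [0, lam0)
  have hIcont : ContinuousOn (fun y : ℝ => 1 / (1 + R y)) (Set.Ico 0 lam0) :=
    continuousOn_const.div hfcont.continuousOn fun y hy => (hpos y hy).ne'
  have hInt : ∀ u v : ℝ, u ∈ Set.Ico (0:ℝ) lam0 → v ∈ Set.Ico (0:ℝ) lam0 →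
      IntervalIntegrable (fun y : ℝ => 1 / (1 + R y)) MeasureTheory.volume u v := by
    intro u v hu hv
    have hsub : Set.uIcc u v ⊆ Set.Ico 0 lam0 := by
      rw [Set.uIcc]
      intro z hz
      simp only [Set.mem_Icc] at hz
      exact ⟨le_trans (le_inf hu.1 hv.1) hz.1,
        lt_of_le_of_lt hz.2 (sup_lt_iff.mpr ⟨hu.2, hv.2⟩)⟩
    exact (hIcont.mono hsub).intervalIntegrable
  have h0mem : (0:ℝ) ∈ Set.Ico (0:ℝ) lam0 := ⟨le_refl 0, hlampos⟩
  have hGadd : ∀ u v : ℝ, u ∈ Set.Ico (0:ℝ) lam0 → v ∈ Set.Ico (0:ℝ) lam0 →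
      Gf v = Gf u + ∫ y in u..v, 1 / (1 + R y) := by
    intro u v hu hv
    rw [hGf u, hGf v,
      ← intervalIntegral.integral_add_adjacent_intervals (hInt 0 u h0mem hu) (hInt u v hu hv)]
  have hmono : StrictMonoOn Gf (Set.Ico 0 lam0) := by
    intro x hx x' hx' hlt
    have hposint : 0 < ∫ y in x..x', 1 / (1 + R y) := by
      refine intervalIntegral_pos_of_pos_on (hInt x x' hx hx') ?_ hlt
      intro y hy
      exact one_div_pos.mpr (hpos y ⟨le_trans hx.1 hy.1.le, lt_trans hy.2 hx'.2⟩)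
    have := hGadd x x' hx hx'
    linarith
  -- divergence at lam0
  set m : ℝ := -(deriv R lam0) with hm
  have hmpos : 0 < m := by rw [hm]; linarith [hderivlt]
  have hfd : HasDerivAt (fun y : ℝ => 1 + R y) (deriv R lam0) lam0 := by
    rw [hderivR.deriv]; exact hderivR.const_add 1
  have hslope : Tendsto (slope (fun y : ℝ => 1 + R y) lam0)
      (nhdsWithin lam0 {lam0}ᶜ) (nhds (deriv R lam0)) :=
    hasDerivAt_iff_tendsto_slope.mp hfd
  have hslope' : Tendsto (slope (fun y : ℝ => 1 + R y) lam0)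
      (nhdsWithin lam0 (Set.Iio lam0)) (nhds (deriv R lam0)) :=
    hslope.mono_left (nhdsWithin_mono _ fun y hy => ne_of_lt hy)
  have hev1 : ∀ᶠ y in nhdsWithin lam0 (Set.Iio lam0),
      -(2*m) < slope (fun y : ℝ => 1 + R y) lam0 y :=
    hslope'.eventually (eventually_gt_nhds (by rw [hm]; linarith))
  obtain ⟨b, hb, hbsub⟩ := mem_nhdsLT_iff_exists_Ioo_subset.mp hev1
  rw [Set.mem_Iio] at hb
  set b' : ℝ := max ((b + lam0)/2) (lam0/2) with hb'
  have hb'gt : b < b' := lt_of_lt_of_le (by linarith) (le_max_left _ _)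
  have hb'pos : 0 < b' := lt_of_lt_of_le (half_pos hlampos) (le_max_right _ _)
  have hb'lt : b' < lam0 := max_lt (by linarith) (by linarith)
  have hb'mem : b' ∈ Set.Ico (0:ℝ) lam0 := ⟨hb'pos.le, hb'lt⟩
  -- upper bound on 1 + R on (b, lam0)
  have hbound : ∀ y ∈ Set.Ioo b lam0, 1 + R y ≤ 2*m*(lam0 - y) := by
    intro y hy
    have h1 : -(2*m) < slope (fun y : ℝ => 1 + R y) lam0 y := hbsub hy
    have ht : 0 < lam0 - y := by linarith [hy.2]
    have hsl : slope (fun y : ℝ => 1 + R y) lam0 y = -((1 + R y) / (lam0 - y)) := by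
      rw [slope_def_field, hroot, sub_zero, ← neg_sub lam0 y, div_neg]
    rw [hsl] at h1
    have h2 : (1 + R y) / (lam0 - y) < 2*m := by linarith
    have := (div_lt_iff₀ ht).mp h2
    linarith
  -- lower bound function for Gf
  have hlow : ∀ x ∈ Set.Ioo b' lam0,
      Gf b' + (1/(2*m)) * (Real.log (lam0 - b') - Real.log (lam0 - x)) ≤ Gf x := by
    intro x hx
    have hxmem : x ∈ Set.Ico (0:ℝ) lam0 := ⟨le_trans hb'pos.le hx.1.le, hx.2⟩
    have hb'x : b' ≤ x := hx.1.le
    have hIcc : Set.Icc b' x ⊆ Set.Ioo b lam0 := fun z hz =>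
      ⟨lt_of_lt_of_le hb'gt hz.1, lt_of_le_of_lt hz.2 hx.2⟩
    have hIccpos : ∀ z ∈ Set.Icc b' x, 0 < lam0 - z := fun z hz => by
      have := (hIcc hz).2; linarith
    -- continuity of comparison integrand
    have hgcont : ContinuousOn (fun y : ℝ => 1/(2*m*(lam0 - y))) (Set.Icc b' x) := by
      refine continuousOn_const.div ?_ ?_
      · exact (continuous_const.mul (continuous_const.sub continuous_id)).continuousOn
      · intro z hz
        have := hIccpos z hz
        positivity
    have huIcc : Set.uIcc b' x = Set.Icc b' x := Set.uIcc_of_le hb'x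
    have hgint : IntervalIntegrable (fun y : ℝ => 1/(2*m*(lam0 - y)))
        MeasureTheory.volume b' x := by
      refine ContinuousOn.intervalIntegrable ?_
      rwa [huIcc]
    have hmono_int : (∫ y in b'..x, 1/(2*m*(lam0 - y))) ≤ ∫ y in b'..x, 1 / (1 + R y) := by
      refine intervalIntegral.integral_mono_on hb'x hgint (hInt b' x hb'mem hxmem) ?_
      intro y hy
      have hymem : y ∈ Set.Ico (0:ℝ) lam0 := ⟨le_trans hb'pos.le hy.1, lt_of_le_of_lt hy.2 hx.2⟩
      have h1 : 0 < 1 + R y := hpos y hymem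
      have h2 : 1 + R y ≤ 2*m*(lam0 - y) := hbound y (hIcc hy)
      exact one_div_le_one_div_of_le h1 h2
    -- compute the comparison integral
    have hcomp : (∫ y in b'..x, 1/(2*m*(lam0 - y)))
        = (1/(2*m)) * (Real.log (lam0 - b') - Real.log (lam0 - x)) := by
      have heq : (fun y : ℝ => 1/(2*m*(lam0 - y))) = fun y : ℝ => (1/(2*m)) * (1/(lam0 - y)) := by
        funext y
        rw [one_div, mul_inv, one_div, one_div]
      rw [heq, intervalIntegral.integral_const_mul]
      have hlogint : (∫ y in b'..x, 1/(lam0 - y))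
          = (- Real.log (lam0 - x)) - (- Real.log (lam0 - b')) := by
        refine intervalIntegral.integral_eq_sub_of_hasDerivAt
          (f := fun y : ℝ => - Real.log (lam0 - y)) ?_ ?_
        · intro y hy
          rw [huIcc] at hy
          have hylt : 0 < lam0 - y := hIccpos y hy
          have h := ((Real.hasDerivAt_log (ne_of_gt hylt)).comp y
            ((hasDerivAt_const y lam0).sub (hasDerivAt_id y))).neg
          simp only [one_div]
          simp at h
          exact h
        · refine ContinuousOn.intervalIntegrable ?_
          rw [huIcc]
          refine continuousOn_const.div ?_ ?_
          · exact (continuous_const.sub continuous_id).continuousOn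
          · exact fun z hz => ne_of_gt (hIccpos z hz)
      rw [hlogint]
      ring
    have hGx : Gf x = Gf b' + ∫ y in b'..x, 1 / (1 + R y) := hGadd b' x hb'mem hxmem
    rw [hGx, ← hcomp]
    linarith
  -- the lower bound tends to atTop
  have t1 : Tendsto (fun x : ℝ => lam0 - x) (nhdsWithin lam0 (Set.Iio lam0))
      (nhdsWithin 0 (Set.Ioi 0)) := by
    refine tendsto_nhdsWithin_of_tendsto_nhds_of_eventually_within _ ?_ ?_
    · have : Tendsto (fun x : ℝ => lam0 - x) (nhds lam0) (nhds (lam0 - lam0)) :=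
        (continuous_const.sub continuous_id).tendsto lam0
      rw [sub_self] at this
      exact this.mono_left nhdsWithin_le_nhds
    · filter_upwards [self_mem_nhdsWithin] with x hx
      rw [Set.mem_Iio] at hx
      rw [Set.mem_Ioi]
      linarith
  have t2 : Tendsto (fun x : ℝ => Real.log (lam0 - x)) (nhdsWithin lam0 (Set.Iio lam0)) atBot :=
    Real.tendsto_log_nhdsGT_zero.comp t1
  have t3 : Tendsto (fun x : ℝ => Gf b' + (1/(2*m)) * (Real.log (lam0 - b') - Real.log (lam0 - x)))
      (nhdsWithin lam0 (Set.Iio lam0)) atTop := by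
    apply tendsto_atTop_add_const_left
    apply Tendsto.const_mul_atTop (by positivity : (0:ℝ) < 1/(2*m))
    apply tendsto_atTop_add_const_left
    exact tendsto_neg_atBot_atTop.comp t2
  refine ⟨hlampos, hroot, hderivlt, hpos, hmono, ?_⟩
  refine tendsto_atTop_mono' _ ?_ t3
  filter_upwards [Ioo_mem_nhdsLT_of_mem ⟨hb'lt, le_refl lam0⟩] with x hx
  exact hlow x hx
end

section
/- Let α₁ ∈ (1,2] and η₁ > 0. For i = 1,2 let q_i ≥ 0 and let ν_i be a nonnegative Borel measure on (0,∞) with ∫₀^∞ (v ∧ v²) ν_i(dv) < ∞, and define J_i(b) := (1/2) q_i b² + ∫₀^∞ (e^{−bv} − 1 + bv) ν_i(dv); assume neither J_1 nor J_2 is identically zero. Let G_1, G_2 : [0,∞) → [0,∞) be continuous with G_1(x) > 0 and G_2(x) > 0 for x > 0, such that x ↦ G_2(x)/G_1(x) is continuously differentiable on (0,∞) and its derivative does not vanish on some nonempty open interval (x̲, x̄) ⊂ (0,∞). If J_1(b·G_1(x)) + J_2(b·G_2(x)) = η₁ x b^{α₁} for all b ≥ 0 and all x ≥ 0, then there exist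 constants c₁ > 0 and c₂ > 0 such that J_1(b) = c₁ b^{α₁} and J_2(b) = c₂ b^{α₁} for all b ≥ 0, and c₁ G_1(x)^{α₁} + c₂ G_2(x)^{α₁} = η₁ x for all x ≥ 0. -/
open MeasureTheory Real Set Filter

lemma aux_exp_nonneg (x : ℝ) : 0 ≤ Real.exp (-x) - 1 + x := by
  nlinarith [Real.add_one_le_exp (-x)]

lemma aux_exp_quad {x : ℝ} (h0 : 0 ≤ x) (h1 : x ≤ 1) :
    Real.exp (-x) - 1 + x ≤ x ^ 2 := by
  have hb := Real.exp_bound (x := -x) (by rw [abs_neg, abs_of_nonneg h0]; exact h1) (n := 2) (by norm_num)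
  simp [Finset.sum_range_succ, abs_neg, abs_of_nonneg h0] at hb
  rw [abs_le] at hb
  nlinarith [hb.2, sq_nonneg x]

set_option maxHeartbeats 3200000 in
/-- two-dimensional classification, case I(b): if the ratio G₂/G₁ has
nonvanishing derivative on some subinterval and J₁(bG₁(x)) + J₂(bG₂(x)) = η₁ x b^{α₁},
then both Laplace exponents are α₁-stable, J_i(b) = c_i b^{α₁}, and
c₁ G₁(x)^{α₁} + c₂ G₂(x)^{α₁} = η₁ x. -/
theorem stmt_14 (α₁ η₁ : ℝ) (hα₁ : α₁ ∈ Set.Ioc (1:ℝ) 2) (hη₁ : 0 < η₁)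
    (q : Fin 2 → ℝ) (hq : ∀ i, 0 ≤ q i)
    (ν : Fin 2 → Measure ℝ)
    (hν : ∀ i, ∫⁻ v in Set.Ioi (0:ℝ), ENNReal.ofReal (min v (v^2)) ∂(ν i) < ⊤)
    (J : Fin 2 → ℝ → ℝ)
    (hJ : ∀ i b, J i b =
      q i / 2 * b^2 + ∫ v in Set.Ioi (0:ℝ), (Real.exp (-(b*v)) - 1 + b*v) ∂(ν i))
    (hJne : ∀ i, ∃ b > (0:ℝ), J i b ≠ 0)
    (G₁ G₂ : ℝ → ℝ)
    (hG₁c : ContinuousOn G₁ (Set.Ici 0)) (hG₂c : ContinuousOn G₂ (Set.Ici 0))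
    (hG₁nn : ∀ x ≥ (0:ℝ), 0 ≤ G₁ x) (hG₂nn : ∀ x ≥ (0:ℝ), 0 ≤ G₂ x)
    (hG₁ : ∀ x > (0:ℝ), 0 < G₁ x) (hG₂ : ∀ x > (0:ℝ), 0 < G₂ x)
    (hratio : ContDiffOn ℝ 1 (fun x => G₂ x / G₁ x) (Set.Ioi 0))
    (x₁ x₂ : ℝ) (hx₁ : 0 < x₁) (hx₁₂ : x₁ < x₂)
    (hder : ∀ x ∈ Set.Ioo x₁ x₂, deriv (fun y => G₂ y / G₁ y) x ≠ 0)
    (hEq : ∀ b ≥ (0:ℝ), ∀ x ≥ (0:ℝ), J 0 (b * G₁ x) + J 1 (b * G₂ x) = η₁ * x * b ^ α₁) :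
    ∃ c₁ > (0:ℝ), ∃ c₂ > (0:ℝ),
      (∀ b ≥ (0:ℝ), J 0 b = c₁ * b ^ α₁ ∧ J 1 b = c₂ * b ^ α₁) ∧
      ∀ x ≥ (0:ℝ), c₁ * G₁ x ^ α₁ + c₂ * G₂ x ^ α₁ = η₁ * x := by
  obtain ⟨hα1, hα2⟩ := hα₁
  have hα0 : 0 < α₁ := by linarith
  set R : ℝ → ℝ := fun x => G₂ x / G₁ x with hRdef
  -- basic facts about J
  have hJnn : ∀ i b, 0 ≤ J i b := by
    intro i b
    rw [hJ]
    have h1 : 0 ≤ q i / 2 * b ^ 2 := by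
      have := hq i; positivity
    have h2 : 0 ≤ ∫ v in Set.Ioi (0:ℝ), (Real.exp (-(b*v)) - 1 + b*v) ∂(ν i) :=
      integral_nonneg fun v => aux_exp_nonneg (b * v)
    linarith
  have hJzero : ∀ i, J i 0 = 0 := by
    intro i
    rw [hJ]
    simp
  -- positivity of R on (0,∞)
  have hRpos : ∀ x > (0:ℝ), 0 < R x := fun x hx => div_pos (hG₂ x hx) (hG₁ x hx)
  -- the scaled functional equation (★)
  have hstar : ∀ x > (0:ℝ), ∀ u ≥ (0:ℝ),
      J 0 u + J 1 (R x * u) = η₁ * x / G₁ x ^ α₁ * u ^ α₁ := by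
    intro x hx u hu
    have hg := hG₁ x hx
    have h := hEq (u / G₁ x) (by positivity) x hx.le
    rw [div_mul_cancel₀ u hg.ne'] at h
    have h2 : u / G₁ x * G₂ x = R x * u := by
      simp only [hRdef]; field_simp
    rw [h2, Real.div_rpow hu hg.le] at h
    rw [h]
    ring
  -- differences
  have hsub : ∀ x ∈ Set.Ioo x₁ x₂, ∀ y ∈ Set.Ioo x₁ x₂, ∀ u ≥ (0:ℝ),
      J 1 (R x / R y * u) = J 1 u +
        ((η₁ * x / G₁ x ^ α₁ - η₁ * y / G₁ y ^ α₁) / R y ^ α₁) * u ^ α₁ := by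
    intro x hx y hy u hu
    have hx0 : (0:ℝ) < x := hx₁.trans hx.1
    have hy0 : (0:ℝ) < y := hx₁.trans hy.1
    have hRy : 0 < R y := hRpos y hy0
    have h1 := hstar x hx0 (u / R y) (by positivity)
    have h2 := hstar y hy0 (u / R y) (by positivity)
    have e1 : R x * (u / R y) = R x / R y * u := by ring
    have e2 : R y * (u / R y) = u := by field_simp
    rw [e1] at h1
    rw [e2] at h2
    rw [Real.div_rpow hu hRy.le] at h1 h2
    linear_combination h1 - h2
  -- the Q property with normalized constant
  have hQ : ∀ x ∈ Set.Ioo x₁ x₂, ∀ y ∈ Set.Ioo x₁ x₂, ∀ u ≥ (0:ℝ),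
      J 1 (R x / R y * u) = J 1 u + (J 1 (R x / R y) - J 1 1) * u ^ α₁ := by
    intro x hx y hy u hu
    have h1 := hsub x hx y hy u hu
    have h2 := hsub x hx y hy 1 (by norm_num)
    rw [mul_one, Real.one_rpow, mul_one] at h2
    have hK : (η₁ * x / G₁ x ^ α₁ - η₁ * y / G₁ y ^ α₁) / R y ^ α₁
        = J 1 (R x / R y) - J 1 1 := by linarith
    rw [hK] at h1
    exact h1
  -- two points with distinct ratio values
  have hmid : (x₁ + x₂) / 2 ∈ Set.Ioo x₁ x₂ := by constructor <;> linarith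
  have hmid0 : (0:ℝ) < (x₁ + x₂) / 2 := hx₁.trans hmid.1
  have hpq : ∃ p ∈ Set.Ioo x₁ x₂, ∃ p' ∈ Set.Ioo x₁ x₂, R p < R p' := by
    by_contra h
    push_neg at h
    have hconst : ∀ z ∈ Set.Ioo x₁ x₂, R z = R ((x₁ + x₂) / 2) := fun z hz =>
      le_antisymm (h _ hmid z hz) (h z hz _ hmid)
    have hd0 : deriv R ((x₁ + x₂) / 2) = 0 := by
      have hev : R =ᶠ[nhds ((x₁ + x₂) / 2)] fun _ => R ((x₁ + x₂) / 2) := by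
        filter_upwards [isOpen_Ioo.mem_nhds hmid] with z hz using hconst z hz
      rw [hev.deriv_eq]
      exact deriv_const _ _
    exact hder _ hmid hd0
  obtain ⟨p, hp, p', hp', hRpp'⟩ := hpq
  have hp0 : (0:ℝ) < p := hx₁.trans hp.1
  have hp'0 : (0:ℝ) < p' := hx₁.trans hp'.1
  have hm : 0 < R p := hRpos p hp0
  set g : ℝ := R p' / R p with hgdef
  have hg1 : 1 < g := (one_lt_div hm).2 hRpp'
  have hg0 : (0:ℝ) < g := lt_trans one_pos hg1
  -- continuity of R on the interval
  have hRcont : ContinuousOn R (Set.Ioo x₁ x₂) := by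
    apply hratio.continuousOn.mono
    intro z hz
    exact hx₁.trans hz.1
  -- surjectivity onto [R p, R p']
  have hsurj : ∀ v ∈ Set.Icc (R p) (R p'), ∃ x ∈ Set.Ioo x₁ x₂, R x = v := by
    rcases le_or_gt p p' with hle | hlt
    · have hss : Set.Icc p p' ⊆ Set.Ioo x₁ x₂ := fun z hz =>
        ⟨lt_of_lt_of_le hp.1 hz.1, lt_of_le_of_lt hz.2 hp'.2⟩
      intro v hv
      obtain ⟨x, hx, hxv⟩ := intermediate_value_Icc hle (hRcont.mono hss) hv
      exact ⟨x, hss hx, hxv⟩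
    · have hss : Set.Icc p' p ⊆ Set.Ioo x₁ x₂ := fun z hz =>
        ⟨lt_of_lt_of_le hp'.1 hz.1, lt_of_le_of_lt hz.2 hp.2⟩
      intro v hv
      obtain ⟨x, hx, hxv⟩ := intermediate_value_Icc' hlt.le (hRcont.mono hss) hv
      exact ⟨x, hss hx, hxv⟩
  -- the Q property for every s ∈ [1, g]
  have hQs : ∀ s ∈ Set.Icc (1:ℝ) g, ∀ u ≥ (0:ℝ),
      J 1 (s * u) = J 1 u + (J 1 s - J 1 1) * u ^ α₁ := by
    intro s hs u hu
    have hv : s * R p ∈ Set.Icc (R p) (R p') := by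
      constructor
      · nlinarith [hs.1, hm]
      · have := hs.2
        rw [hgdef, le_div_iff₀ hm] at this
        linarith
    obtain ⟨x, hx, hxv⟩ := hsurj _ hv
    have hsx : R x / R p = s := by
      rw [hxv]; field_simp
    have := hQ x hx p hp u hu
    rw [hsx] at this
    exact this
  -- cocycle identity
  have hcoc : ∀ s ∈ Set.Icc (1:ℝ) g, ∀ t ∈ Set.Icc (1:ℝ) g,
      (J 1 s - J 1 1) * (t ^ α₁ - 1) = (J 1 t - J 1 1) * (s ^ α₁ - 1) := by
    intro s hs t ht
    have h1 := hQs s hs t (by linarith [ht.1])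
    have h2 := hQs t ht s (by linarith [hs.1])
    rw [show t * s = s * t by ring] at h2
    linear_combination h2 - h1
  have hgα : 1 < g ^ α₁ := Real.one_lt_rpow_iff_of_pos hg0 |>.2 (Or.inl ⟨hg1, hα0⟩)
  set c : ℝ := (J 1 g - J 1 1) / (g ^ α₁ - 1) with hcdef
  have hK : ∀ s ∈ Set.Icc (1:ℝ) g, J 1 s - J 1 1 = c * (s ^ α₁ - 1) := by
    intro s hs
    have h := hcoc s hs g ⟨hg1.le, le_refl g⟩
    have hne : g ^ α₁ - 1 ≠ 0 := by linarith
    rw [hcdef, div_mul_eq_mul_div, eq_div_iff hne]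
    linear_combination h
  -- scaling invariance of ψ(u) = J 1 u - c u^α₁
  have hψbase : ∀ s ∈ Set.Icc (1:ℝ) g, ∀ u ≥ (0:ℝ),
      J 1 (s * u) - c * (s * u) ^ α₁ = J 1 u - c * u ^ α₁ := by
    intro s hs u hu
    have h := hQs s hs u hu
    have hKs := hK s hs
    rw [Real.mul_rpow (by linarith [hs.1] : (0:ℝ) ≤ s) hu, h, hKs]
    ring
  have hstep : ∀ n : ℕ, ∀ t : ℝ, 1 ≤ t → t ≤ g ^ n → ∀ u ≥ (0:ℝ),
      J 1 (t * u) - c * (t * u) ^ α₁ = J 1 u - c * u ^ α₁ := by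
    intro n
    induction n with
    | zero =>
      intro t h1 h2 u hu
      have ht1 : t = 1 := le_antisymm (by simpa using h2) h1
      subst ht1
      exact hψbase 1 ⟨le_refl 1, hg1.le⟩ u hu
    | succ n ih =>
      intro t h1 h2 u hu
      by_cases hle : t ≤ g
      · exact hψbase t ⟨h1, hle⟩ u hu
      · push_neg at hle
        have h1' : 1 ≤ t / g := (one_le_div hg0).2 hle.le
        have h2' : t / g ≤ g ^ n := by
          rw [div_le_iff₀ hg0]
          calc t ≤ g ^ (n + 1) := h2
          _ = g ^ n * g := pow_succ g n
        have e : t * u = g * (t / g * u) := by field_simp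
        rw [e, hψbase g ⟨hg1.le, le_refl g⟩ (t / g * u)
          (mul_nonneg (by linarith) hu)]
        exact ih (t / g) h1' h2' u hu
  have hall : ∀ t : ℝ, 1 ≤ t → ∀ u ≥ (0:ℝ),
      J 1 (t * u) - c * (t * u) ^ α₁ = J 1 u - c * u ^ α₁ := by
    intro t ht u hu
    obtain ⟨n, hn⟩ := pow_unbounded_of_one_lt t hg1
    exact hstep n t ht hn.le u hu
  have hconstψ : ∀ u > (0:ℝ), J 1 u - c * u ^ α₁ = J 1 1 - c * 1 ^ α₁ := by
    intro u hu
    rcases le_or_gt 1 u with h | h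
    · have := hall u h 1 (by norm_num)
      simpa [mul_one] using this
    · have := hall (1 / u) ((one_le_div hu).2 h.le) u hu.le
      rw [show 1 / u * u = 1 by field_simp] at this
      exact this.symm
  -- integrability of the control function
  have hgmeas : Continuous fun v : ℝ => min v (v ^ 2) :=
    continuous_id.min (continuous_pow 2)
  have hgInt : Integrable (fun v => min v (v ^ 2)) ((ν 1).restrict (Set.Ioi 0)) := by
    refine ⟨hgmeas.aestronglyMeasurable, ?_⟩
    rw [hasFiniteIntegral_iff_ofReal]
    · exact hν 1
    · rw [Filter.EventuallyLE, ae_restrict_iff' measurableSet_Ioi]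
      filter_upwards with v hv
      exact le_min hv.le (by positivity)
  set C : ℝ := ∫ v in Set.Ioi (0:ℝ), min v (v ^ 2) ∂(ν 1) with hCdef
  have hCnn : 0 ≤ C :=
    setIntegral_nonneg measurableSet_Ioi fun v hv => le_min (le_of_lt hv) (by positivity)
  -- smallness of J 1 near zero
  have hJle : ∀ u : ℝ, 0 ≤ u → u ≤ 1 → J 1 u ≤ q 1 / 2 * u ^ 2 + C * u := by
    intro u hu0 hu1
    rw [hJ]
    have hpt : ∀ v ∈ Set.Ioi (0:ℝ),
        Real.exp (-(u * v)) - 1 + u * v ≤ u * min v (v ^ 2) := by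
      intro v hv
      simp only [Set.mem_Ioi] at hv
      rcases le_or_gt v 1 with hv1 | hv1
      · have hx0 : 0 ≤ u * v := mul_nonneg hu0 hv.le
        have hx1 : u * v ≤ 1 := by nlinarith
        have := aux_exp_quad hx0 hx1
        have hmin : min v (v ^ 2) = v ^ 2 := min_eq_right (by nlinarith)
        rw [hmin]
        nlinarith [mul_nonneg (mul_nonneg hu0 (sq_nonneg v)) (by linarith : (0:ℝ) ≤ 1 - u)]
      · have hE : Real.exp (-(u * v)) ≤ 1 :=
          Real.exp_le_one_iff.2 (by nlinarith)
        have hmin : min v (v ^ 2) = v := min_eq_left (by nlinarith)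
        rw [hmin]
        nlinarith
    have hfInt : Integrable (fun v => Real.exp (-(u * v)) - 1 + u * v)
        ((ν 1).restrict (Set.Ioi 0)) := by
      apply Integrable.mono' (hgInt.const_mul u)
      · have hcont : Continuous fun v : ℝ => Real.exp (-(u * v)) - 1 + u * v :=
          ((Real.continuous_exp.comp (continuous_const.mul continuous_id).neg).sub
            continuous_const).add (continuous_const.mul continuous_id)
        exact hcont.aestronglyMeasurable
      · rw [ae_restrict_iff' measurableSet_Ioi]
        filter_upwards with v hv
        rw [Real.norm_eq_abs, abs_of_nonneg (aux_exp_nonneg (u * v))]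
        exact hpt v hv
    have hmono : (∫ v in Set.Ioi (0:ℝ), (Real.exp (-(u * v)) - 1 + u * v) ∂(ν 1))
        ≤ ∫ v in Set.Ioi (0:ℝ), u * min v (v ^ 2) ∂(ν 1) := by
      apply integral_mono_ae hfInt (hgInt.const_mul u)
      rw [Filter.EventuallyLE, ae_restrict_iff' measurableSet_Ioi]
      filter_upwards with v hv
      exact hpt v hv
    rw [integral_const_mul] at hmono
    have hcomm : u * C = C * u := mul_comm u C
    linarith
  -- ψ(1) = 0
  have hψ1 : J 1 1 - c * 1 ^ α₁ = 0 := by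
    set D : ℝ := q 1 / 2 + C + |c| with hDdef
    have hD : 0 ≤ D := by
      have := hq 1
      have := abs_nonneg c
      rw [hDdef]; linarith
    have key : ∀ u : ℝ, 0 < u → u ≤ 1 → |J 1 1 - c * 1 ^ α₁| ≤ D * u := by
      intro u hu0 hu1
      rw [← hconstψ u hu0]
      have h1 : J 1 u ≤ q 1 / 2 * u ^ 2 + C * u := hJle u hu0.le hu1
      have h2 : u ^ α₁ ≤ u := by
        have := Real.rpow_le_rpow_of_exponent_ge hu0 hu1 hα1.le
        rwa [Real.rpow_one] at this
      have h3 : 0 ≤ u ^ α₁ := Real.rpow_nonneg hu0.le α₁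
      have h4 : |c * u ^ α₁| ≤ |c| * u := by
        rw [abs_mul, abs_of_nonneg h3]
        exact mul_le_mul_of_nonneg_left h2 (abs_nonneg c)
      have hcu1 : c * u ^ α₁ ≤ |c| * u := le_trans (le_abs_self _) h4
      have hcu2 : -(|c| * u) ≤ c * u ^ α₁ := by
        have := neg_abs_le (c * u ^ α₁)
        linarith
      have hqu : q 1 / 2 * u ^ 2 ≤ q 1 / 2 * u := by
        nlinarith [mul_nonneg (hq 1) (mul_nonneg hu0.le (show (0:ℝ) ≤ 1 - u by linarith))]
      have hDu : D * u = q 1 / 2 * u + C * u + |c| * u := by rw [hDdef]; ring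
      have hCu : 0 ≤ C * u := mul_nonneg hCnn hu0.le
      have hqu0 : 0 ≤ q 1 / 2 * u := mul_nonneg (by linarith [hq 1]) hu0.le
      have hJu := hJnn 1 u
      rw [abs_le]
      clear_value c C D
      constructor
      · linarith
      · linarith
    by_contra hne
    have habs : 0 < |J 1 1 - c * 1 ^ α₁| := abs_pos.2 hne
    set e : ℝ := |J 1 1 - c * 1 ^ α₁| with hedef
    have hD1 : (0:ℝ) < D + 1 := by linarith
    have hu0 : 0 < min 1 (e / (2 * (D + 1))) := lt_min one_pos (by positivity)
    have hu1 : min 1 (e / (2 * (D + 1))) ≤ 1 := min_le_left _ _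
    have hk := key _ hu0 hu1
    have hk2 : D * min 1 (e / (2 * (D + 1))) ≤ D * (e / (2 * (D + 1))) :=
      mul_le_mul_of_nonneg_left (min_le_right _ _) hD
    have hk3 : e ≤ D * (e / (2 * (D + 1))) := le_trans hk hk2
    rw [← mul_div_assoc, le_div_iff₀ (by positivity)] at hk3
    nlinarith [mul_nonneg hD habs.le]
  -- J 1 is a pure power
  have hJ1form : ∀ b : ℝ, 0 ≤ b → J 1 b = c * b ^ α₁ := by
    intro b hb
    rcases eq_or_lt_of_le hb with h | h
    · rw [← h, hJzero 1, Real.zero_rpow hα0.ne']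
      ring
    · have := hconstψ b h
      rw [hψ1] at this
      linarith
  -- J 0 is a pure power
  have hRm0 : 0 < R ((x₁ + x₂) / 2) := hRpos _ hmid0
  set c₁' : ℝ := η₁ * ((x₁ + x₂) / 2) / G₁ ((x₁ + x₂) / 2) ^ α₁
      - c * R ((x₁ + x₂) / 2) ^ α₁ with hc₁def
  have hJ0form : ∀ b : ℝ, 0 ≤ b → J 0 b = c₁' * b ^ α₁ := by
    intro b hb
    have h := hstar ((x₁ + x₂) / 2) hmid0 b hb
    rw [hJ1form _ (mul_nonneg hRm0.le hb), Real.mul_rpow hRm0.le hb] at h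
    rw [hc₁def]
    linear_combination h
  -- positivity
  have hc₁pos : 0 < c₁' := by
    obtain ⟨b, hb, hbne⟩ := hJne 0
    have hb' := hJ0form b hb.le
    have hbα : 0 < b ^ α₁ := Real.rpow_pos_of_pos hb α₁
    have hnn := hJnn 0 b
    rcases lt_trichotomy c₁' 0 with h | h | h
    · nlinarith
    · exfalso; apply hbne; rw [hb', h, zero_mul]
    · exact h
  have hc₂pos : 0 < c := by
    obtain ⟨b, hb, hbne⟩ := hJne 1
    have hb' := hJ1form b hb.le
    have hbα : 0 < b ^ α₁ := Real.rpow_pos_of_pos hb α₁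
    have hnn := hJnn 1 b
    rcases lt_trichotomy c 0 with h | h | h
    · nlinarith
    · exfalso; apply hbne; rw [hb', h, zero_mul]
    · exact h
  refine ⟨c₁', hc₁pos, c, hc₂pos, fun b hb => ⟨hJ0form b hb, hJ1form b hb⟩, ?_⟩
  intro x hx
  have h := hEq 1 (by norm_num) x hx
  simp only [one_mul, Real.one_rpow, mul_one] at h
  rw [hJ0form _ (hG₁nn x hx), hJ1form _ (hG₂nn x hx)] at h
  exact h
end

section
/- Let 2 ≥ α₁ > α₂ > 1 and let c₁, c₂, d₁, d₂, η₁, η₂ > 0. Then there do not exist functions G_1, G_2 : [0,∞) → [0,∞) such that for all x ≥ 0 both c₁ G_1(x)^{α₁} + d₁ G_2(x)^{α₁} = η₁ x and c₂ G_1(x)^{α₂} + d₂ G_2(x)^{α₂} = η₂ x hold. -/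
open Real Set

/-- with 2 ≥ α₁ > α₂ > 1 and all coefficients positive, there are no
nonnegative functions G₁, G₂ on [0,∞) satisfying simultaneously
c₁G₁(x)^{α₁} + d₁G₂(x)^{α₁} = η₁x and c₂G₁(x)^{α₂} + d₂G₂(x)^{α₂} = η₂x for all x ≥ 0. -/
theorem stmt_15 (α₁ α₂ c₁ c₂ d₁ d₂ η₁ η₂ : ℝ)
    (hα₁ : α₁ ≤ 2) (h12 : α₂ < α₁) (hα₂ : 1 < α₂)
    (hc₁ : 0 < c₁) (hc₂ : 0 < c₂) (hd₁ : 0 < d₁) (hd₂ : 0 < d₂)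
    (hη₁ : 0 < η₁) (hη₂ : 0 < η₂) :
    ¬ ∃ G₁ G₂ : ℝ → ℝ,
      (∀ x ≥ (0:ℝ), 0 ≤ G₁ x ∧ 0 ≤ G₂ x) ∧
      (∀ x ≥ (0:ℝ),
        c₁ * G₁ x ^ α₁ + d₁ * G₂ x ^ α₁ = η₁ * x ∧
        c₂ * G₁ x ^ α₂ + d₂ * G₂ x ^ α₂ = η₂ * x) := by
  rintro ⟨G₁, G₂, hnn, heq⟩
  have hα₁0 : (0:ℝ) < α₁ := by linarith
  have hα₂0 : (0:ℝ) < α₂ := by linarith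
  set β : ℝ := α₂ / α₁ with hβdef
  have hβ0 : 0 < β := div_pos hα₂0 hα₁0
  have hβ1 : β < 1 := (div_lt_one hα₁0).mpr h12
  set C : ℝ := c₂ * (η₁ / c₁) ^ β + d₂ * (η₁ / d₁) ^ β with hCdef
  have hC0 : 0 < C := by
    have h1 : (0:ℝ) < (η₁ / c₁) ^ β := rpow_pos_of_pos (div_pos hη₁ hc₁) β
    have h2 : (0:ℝ) < (η₁ / d₁) ^ β := rpow_pos_of_pos (div_pos hη₁ hd₁) β
    positivity
  set a : ℝ := C / η₂ + 1 with hadef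
  have ha0 : 0 < a := by positivity
  set x : ℝ := a ^ (1 / (1 - β)) with hxdef
  have hx0 : 0 < x := rpow_pos_of_pos ha0 _
  have hx0' : (0:ℝ) ≤ x := le_of_lt hx0
  obtain ⟨hg0, hh0⟩ := hnn x hx0'
  obtain ⟨he1, he2⟩ := heq x hx0'
  -- bounds on G₁ x ^ α₂ and G₂ x ^ α₂
  have key : ∀ (g c : ℝ), 0 ≤ g → 0 < c → c * g ^ α₁ ≤ η₁ * x →
      g ^ α₂ ≤ (η₁ * x / c) ^ β := by
    intro g c hg hc hle
    have h1 : g ^ α₁ ≤ η₁ * x / c := by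
      rw [le_div_iff₀ hc]; linarith [hle]
    have h2 : g ^ α₂ = (g ^ α₁) ^ β := by
      rw [← Real.rpow_mul hg]
      congr 1
      simp only [hβdef]
      field_simp
    rw [h2]
    exact rpow_le_rpow (rpow_nonneg hg α₁) h1 (le_of_lt hβ0)
  have hb1 : G₁ x ^ α₂ ≤ (η₁ * x / c₁) ^ β := by
    apply key _ _ hg0 hc₁
    nlinarith [mul_nonneg hd₁.le (rpow_nonneg hh0 α₁)]
  have hb2 : G₂ x ^ α₂ ≤ (η₁ * x / d₁) ^ β := by
    apply key _ _ hh0 hd₁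
    nlinarith [mul_nonneg hc₁.le (rpow_nonneg hg0 α₁)]
  -- so η₂ x ≤ C x^β
  have hsplit : ∀ c : ℝ, 0 < c → (η₁ * x / c) ^ β = (η₁ / c) ^ β * x ^ β := by
    intro c hc
    rw [show η₁ * x / c = (η₁ / c) * x by ring,
      Real.mul_rpow (by positivity) hx0']
  have hupper : η₂ * x ≤ C * x ^ β := by
    have := hsplit c₁ hc₁
    have := hsplit d₁ hd₁
    have h1 : c₂ * G₁ x ^ α₂ ≤ c₂ * ((η₁ / c₁) ^ β * x ^ β) := by
      rw [← hsplit c₁ hc₁]; exact mul_le_mul_of_nonneg_left hb1 hc₂.le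
    have h2 : d₂ * G₂ x ^ α₂ ≤ d₂ * ((η₁ / d₁) ^ β * x ^ β) := by
      rw [← hsplit d₁ hd₁]; exact mul_le_mul_of_nonneg_left hb2 hd₂.le
    calc η₂ * x = c₂ * G₁ x ^ α₂ + d₂ * G₂ x ^ α₂ := he2.symm
    _ ≤ c₂ * ((η₁ / c₁) ^ β * x ^ β) + d₂ * ((η₁ / d₁) ^ β * x ^ β) := by linarith
    _ = C * x ^ β := by rw [hCdef]; ring
  -- but η₂ x > C x^β
  have hxb : x ^ (1 - β) = a := by
    rw [hxdef, ← Real.rpow_mul ha0.le, one_div_mul_cancel (by linarith : (1:ℝ) - β ≠ 0),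
      rpow_one]
  have hxsplit : x = x ^ β * x ^ (1 - β) := by
    rw [← Real.rpow_add hx0, show β + (1 - β) = (1:ℝ) by ring, rpow_one]
  have hxβ0 : 0 < x ^ β := rpow_pos_of_pos hx0 β
  have hlower : C * x ^ β < η₂ * x := by
    have : η₂ * x = η₂ * (x ^ β * a) := by rw [← hxb, ← hxsplit]
    rw [this, hadef]
    have : η₂ * (x ^ β * (C / η₂ + 1)) = C * x ^ β + η₂ * x ^ β := by
      field_simp
    rw [this]
    linarith [mul_pos hη₂ hxβ0]
  linarith
end

section
/- Let a, b, c, d > 0 and 2 ≥ α₁ > α₂ > 1. Then there exists X > 0 such that for all x ≥ X and all y ∈ [0, min((b x / c)^{1/α₁}, (a x / d)^{1/α₂})] one has (b x − c y^{α₁})^{1/α₁} < (a x − d y^{α₂})^{1/α₂}. -/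
open Real Set

/-- for a,b,c,d > 0 and 2 ≥ α₁ > α₂ > 1, for all sufficiently large x and
all y ∈ [0, min((bx/c)^{1/α₁}, (ax/d)^{1/α₂})]:
(bx − cy^{α₁})^{1/α₁} < (ax − dy^{α₂})^{1/α₂}. -/
theorem stmt_17 (a b c d α₁ α₂ : ℝ) (ha : 0 < a) (hb : 0 < b) (hc : 0 < c) (hd : 0 < d)
    (hα₁ : α₁ ≤ 2) (h12 : α₂ < α₁) (hα₂ : 1 < α₂) :
    ∃ X > (0:ℝ), ∀ x ≥ X,
      ∀ y ∈ Set.Icc (0:ℝ) (min ((b*x/c)^(1/α₁)) ((a*x/d)^(1/α₂))),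
        (b*x - c*y^α₁)^(1/α₁) < (a*x - d*y^α₂)^(1/α₂) := by
  have hα₁0 : (0:ℝ) < α₁ := by linarith
  have hα₂0 : (0:ℝ) < α₂ := by linarith
  set γ : ℝ := α₂ / α₁ with hγdef
  have hγ0 : 0 < γ := div_pos hα₂0 hα₁0
  have hγ1 : γ < 1 := (div_lt_one hα₁0).2 h12
  have hε : 0 < 1/α₂ - 1/α₁ := by
    have := one_div_lt_one_div_of_lt hα₂0 h12
    linarith
  obtain ⟨X₁, hX₁⟩ := Filter.eventually_atTop.1
    ((tendsto_rpow_atTop (by linarith : (0:ℝ) < 1 - γ)).eventually_ge_atTop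
      (2 * d * (b/c)^γ / a))
  obtain ⟨X₂, hX₂⟩ := Filter.eventually_atTop.1
    ((tendsto_rpow_atTop hε).eventually_gt_atTop (b^(1/α₁) * (2/a)^(1/α₂)))
  refine ⟨max 1 (max X₁ X₂), by positivity, ?_⟩
  intro x hx y hy
  have hx1 : (1:ℝ) ≤ x := le_trans (le_max_left _ _) hx
  have hxp : (0:ℝ) < x := by linarith
  have hxX₁ : X₁ ≤ x := le_trans (le_trans (le_max_left _ _) (le_max_right _ _)) hx
  have hxX₂ : X₂ ≤ x := le_trans (le_trans (le_max_right _ _) (le_max_right _ _)) hx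
  obtain ⟨hy0, hyub⟩ := hy
  have hyb : y ≤ (b*x/c)^(1/α₁) := le_trans hyub (min_le_left _ _)
  have hbxc : (0:ℝ) ≤ b*x/c := by positivity
  -- y^α₁ ≤ b*x/c
  have hA : y^α₁ ≤ b*x/c := by
    have h1 : y^α₁ ≤ ((b*x/c)^(1/α₁))^α₁ := Real.rpow_le_rpow hy0 hyb hα₁0.le
    have h2 : ((b*x/c)^(1/α₁))^α₁ = b*x/c := by
      rw [← Real.rpow_mul hbxc, one_div, inv_mul_cancel₀ hα₁0.ne', Real.rpow_one]
    rwa [h2] at h1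
  -- y^α₂ ≤ (b*x/c)^γ
  have hB : y^α₂ ≤ (b*x/c)^γ := by
    have h1 : y^α₂ ≤ ((b*x/c)^(1/α₁))^α₂ := Real.rpow_le_rpow hy0 hyb hα₂0.le
    have h2 : ((b*x/c)^(1/α₁))^α₂ = (b*x/c)^γ := by
      rw [← Real.rpow_mul hbxc]
      congr 1
      rw [hγdef]; ring
    rwa [h2] at h1
  -- split (b*x/c)^γ = (b/c)^γ * x^γ
  have hsplit : (b*x/c)^γ = (b/c)^γ * x^γ := by
    rw [show b*x/c = (b/c)*x by ring, Real.mul_rpow (by positivity) hxp.le]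
  -- d*y^α₂ ≤ a*x/2
  have hE : d * y^α₂ ≤ a*x/2 := by
    have h1 := hX₁ x hxX₁
    have hxγ : (0:ℝ) < x^γ := Real.rpow_pos_of_pos hxp _
    have h2 : x^(1-γ) * x^γ = x := by
      rw [← Real.rpow_add hxp]; norm_num
    have h3 : 2 * d * (b/c)^γ / a * x^γ ≤ x^(1-γ) * x^γ := by
      exact mul_le_mul_of_nonneg_right h1 hxγ.le
    rw [h2] at h3
    have h4 : d * y^α₂ ≤ d * ((b/c)^γ * x^γ) := by
      have := hB
      rw [hsplit] at this
      exact mul_le_mul_of_nonneg_left this hd.le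
    have h5 : 2 * d * (b/c)^γ / a * x^γ = (2 * (d * ((b/c)^γ * x^γ))) / a := by
      ring
    rw [h5, div_le_iff₀ ha] at h3
    nlinarith [h4, h3]
  -- middle strict inequality
  have hD : (b*x)^(1/α₁) < (a*x/2)^(1/α₂) := by
    have h1 := hX₂ x hxX₂
    have hP : (0:ℝ) < x^(1/α₁) := Real.rpow_pos_of_pos hxp _
    have hQ : (0:ℝ) < x^(1/α₂) := Real.rpow_pos_of_pos hxp _
    have hBp : (0:ℝ) < b^(1/α₁) := Real.rpow_pos_of_pos hb _
    have hAp : (0:ℝ) < (a/2)^(1/α₂) := Real.rpow_pos_of_pos (by positivity) _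
    have hsub : x^(1/α₂ - 1/α₁) = x^(1/α₂) / x^(1/α₁) := Real.rpow_sub hxp _ _
    have hinv : (2/a)^(1/α₂) = ((a/2)^(1/α₂))⁻¹ := by
      rw [show (2:ℝ)/a = (a/2)⁻¹ by field_simp, Real.inv_rpow (by positivity)]
    rw [hinv, hsub] at h1
    have h2 : b^(1/α₁) / (a/2)^(1/α₂) < x^(1/α₂) / x^(1/α₁) := by
      rw [div_eq_mul_inv]; exact h1
    have h3 : b^(1/α₁) * x^(1/α₁) < (a/2)^(1/α₂) * x^(1/α₂) := by
      rw [div_lt_div_iff₀ hAp hP] at h2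
      linarith [h2]
    calc (b*x)^(1/α₁) = b^(1/α₁) * x^(1/α₁) := Real.mul_rpow hb.le hxp.le
      _ < (a/2)^(1/α₂) * x^(1/α₂) := h3
      _ = (a*x/2)^(1/α₂) := by
          rw [show a*x/2 = (a/2)*x by ring, Real.mul_rpow (by positivity) hxp.le]
  -- LHS ≤ (b*x)^(1/α₁)
  have hC : (b*x - c*y^α₁)^(1/α₁) ≤ (b*x)^(1/α₁) := by
    have hcc : c * (b*x/c) = b*x := by field_simp
    have hcy : c * y^α₁ ≤ b*x := by
      calc c * y^α₁ ≤ c * (b*x/c) := mul_le_mul_of_nonneg_left hA hc.le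
        _ = b*x := hcc
    apply Real.rpow_le_rpow
    · linarith
    · nlinarith [Real.rpow_nonneg hy0 α₁]
    · positivity
  -- (a*x/2)^(1/α₂) ≤ RHS
  have hF : (a*x/2)^(1/α₂) ≤ (a*x - d*y^α₂)^(1/α₂) := by
    apply Real.rpow_le_rpow (by positivity) (by linarith) (by positivity)
  exact lt_of_le_of_lt hC (lt_of_lt_of_le hD hF)
end
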